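/- arXiv:0710.1224 — 12 statements merged into one kernel-verified Lean document; each statement's English description precedes it below -/
import Mathlib

section
/- Let n ≥ 1. In the multivariate polynomial ring ℂ[x_1, ..., x_n], the ideal I generated by e_1, ..., e_{n−1} and e_n − 1 is a radical ideal, and the quotient ring ℂ[x_1, ..., x_n]/I is a ℂ-vector space of dimension n!. -/
set_option maxHeartbeats 1000000
set_option synthInstance.maxHeartbeats 400000

open Polynomial Finset in
theorem span_monomials_top {K R : Type*} [Field K] [CommRing R] [Nontrivial R] [Algebra K R]
    {n : ℕ} (y : Fin n → R)
    (hgen : Algebra.adjoin K (Set.range y) = ⊤) (c : K)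
    (hprod : (∏ j : Fin n, (X - C (y j))) = X ^ n + C (algebraMap K R c)) :
    Submodule.span K {z : R | ∃ a : Fin n → ℕ, (∀ j, a j + (j : ℕ) < n) ∧ z = ∏ j, y j ^ a j}
      = ⊤ := by
  classical
  set MS : ℕ → Set R := fun k =>
    {z | ∃ a : Fin n → ℕ, (∀ j, a j + (j : ℕ) < n) ∧ (∀ j : Fin n, k ≤ (j : ℕ) → a j = 0) ∧
      z = ∏ j, y j ^ a j} with hMS
  have key : ∀ k, k ≤ n →
      Subalgebra.toSubmodule (Algebra.adjoin K (y '' {j | (j : ℕ) < k}))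
        ≤ Submodule.span K (MS k) := by
    intro k
    induction k with
    | zero =>
      intro _
      have h0 : (y '' {j | (j : ℕ) < 0}) = ∅ := by simp
      rw [h0, Algebra.adjoin_empty, Algebra.toSubmodule_bot, Submodule.one_eq_span]
      apply Submodule.span_mono
      rintro z rfl
      exact ⟨0, fun j => by simpa using j.isLt, fun j _ => rfl, by simp⟩
    | succ k IH =>
      intro h
      have hk : k < n := h
      set x := y ⟨k, hk⟩ with hx
      set s := y '' {j | (j : ℕ) < k} with hs
      set A := Algebra.adjoin K s with hA
      have hinj : Function.Injective (algebraMap A R) := Subtype.coe_injective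
      -- the polynomial over A
      set P₁ : Polynomial A := ∏ i : Fin k,
        (X - C (⟨y (Fin.castLE hk.le i),
          Algebra.subset_adjoin ⟨Fin.castLE hk.le i, by simp, rfl⟩⟩ : A)) with hP₁
      have hP₁monic : P₁.Monic := monic_prod_of_monic _ _ (fun _ _ => monic_X_sub_C _)
      have hfilter : Finset.univ.filter (fun j : Fin n => (j : ℕ) < k)
          = Finset.map (Fin.castLEEmb hk.le) Finset.univ := by
        ext j
        simp only [Finset.mem_filter, Finset.mem_univ, true_and, Finset.mem_map,
          Fin.castLEEmb_apply]
        constructor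
        · intro hj; exact ⟨⟨(j : ℕ), hj⟩, by ext; simp⟩
        · rintro ⟨i, rfl⟩; simp [i.isLt]
      have hmapP₁ : P₁.map (algebraMap A R)
          = ∏ j ∈ Finset.univ.filter (fun j : Fin n => (j : ℕ) < k), (X - C (y j)) := by
        rw [hP₁, Polynomial.map_prod, hfilter, Finset.prod_map]
        refine Finset.prod_congr rfl fun i _ => ?_
        simp [Polynomial.map_sub, Subalgebra.algebraMap_eq]
      set Q₂ : Polynomial R :=
        ∏ j ∈ Finset.univ.filter (fun j : Fin n => ¬ (j : ℕ) < k), (X - C (y j)) with hQ₂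
      have hQ₂monic : Q₂.Monic := monic_prod_of_monic _ _ (fun _ _ => monic_X_sub_C _)
      have hsplit : P₁.map (algebraMap A R) * Q₂ = X ^ n + C (algebraMap K R c) := by
        rw [hmapP₁, hQ₂, Finset.prod_filter_mul_prod_filter_not, hprod]
      set p : Polynomial A := (X ^ n + C (algebraMap K A c)) /ₘ P₁ with hp
      have hmapbig : Polynomial.map (algebraMap A R) (X ^ n + C (algebraMap K A c))
          = X ^ n + C (algebraMap K R c) := by
        rw [Polynomial.map_add, Polynomial.map_pow, Polynomial.map_X, Polynomial.map_C,
          ← IsScalarTower.algebraMap_apply K A R]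
      have hmapp : p.map (algebraMap A R) = Q₂ := by
        rw [hp, Polynomial.map_divByMonic _ hP₁monic, hmapbig, ← hsplit,
          mul_divByMonic_cancel_left _ (hP₁monic.map _)]
      have hpmonic : p.Monic := by
        apply Polynomial.monic_of_injective hinj
        rw [hmapp]; exact hQ₂monic
      have hcard : (Finset.univ.filter (fun j : Fin n => ¬ (j : ℕ) < k)).card = n - k := by
        have h1 : (Finset.univ.filter (fun j : Fin n => (j : ℕ) < k)).card = k := by
          rw [hfilter, Finset.card_map, Finset.card_univ, Fintype.card_fin]
        have h2 := Finset.card_filter_add_card_filter_not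
          (s := (Finset.univ : Finset (Fin n))) (p := fun j : Fin n => (j : ℕ) < k)
        rw [Finset.card_univ, Fintype.card_fin] at h2
        omega
      have hdegp : p.natDegree = n - k := by
        have h1 := Polynomial.natDegree_map_eq_of_injective hinj p
        rw [hmapp] at h1
        rw [← h1, hQ₂, Polynomial.natDegree_prod_of_monic _ _ (fun _ _ => monic_X_sub_C _)]
        simp only [natDegree_X_sub_C, Finset.sum_const, smul_eq_mul, mul_one]
        exact hcard
      have hroot : Polynomial.aeval x p = 0 := by
        rw [Polynomial.aeval_def, ← Polynomial.eval_map, hmapp, hQ₂, Polynomial.eval_prod]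
        apply Finset.prod_eq_zero (i := (⟨k, hk⟩ : Fin n)) (by simp)
        simp [hx]
      -- now the element
      intro z hz
      have himg : y '' {j : Fin n | (j : ℕ) < k + 1} = insert x s := by
        rw [show {j : Fin n | (j : ℕ) < k + 1} = insert ⟨k, hk⟩ {j : Fin n | (j : ℕ) < k} by
          ext j; simp [Nat.lt_succ_iff_lt_or_eq, Fin.ext_iff]; omega, Set.image_insert_eq]
      have hz' : z ∈ Algebra.adjoin A {x} := by
        have hle : Algebra.adjoin K (insert x s)
            ≤ (Algebra.adjoin A {x}).restrictScalars K := by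
          apply Algebra.adjoin_le
          rintro r (rfl | hr)
          · exact Algebra.subset_adjoin rfl
          · exact Subalgebra.algebraMap_mem (Algebra.adjoin A {x}) ⟨r, Algebra.subset_adjoin hr⟩
        rw [Subalgebra.mem_toSubmodule, himg] at hz
        exact hle hz
      rw [Algebra.adjoin_singleton_eq_range_aeval, AlgHom.mem_range] at hz'
      obtain ⟨q, hq⟩ := hz'
      set r := q %ₘ p with hr
      have hzr : z = Polynomial.aeval x r := by
        conv_lhs => rw [← hq, ← Polynomial.modByMonic_add_div q p]
        rw [map_add, map_mul, hroot, zero_mul, add_zero]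
      have hdegr : r.natDegree < n - k := by
        rcases eq_or_ne r 0 with h0 | h0
        · rw [h0, Polynomial.natDegree_zero]; omega
        · have hd := Polynomial.degree_modByMonic_lt q hpmonic
          rw [← hr] at hd
          have := Polynomial.natDegree_lt_natDegree h0 hd
          omega
      have hsum : z = ∑ i ∈ Finset.range (n - k), r.coeff i • x ^ i := by
        rw [hzr, Polynomial.aeval_eq_sum_range' hdegr]
      rw [hsum]
      apply Submodule.sum_mem
      intro i hi
      rw [Finset.mem_range] at hi
      have hcoeff : ((r.coeff i : R)) ∈ Submodule.span K (MS k) := by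
        apply IH (by omega)
        rw [Subalgebra.mem_toSubmodule]
        exact (r.coeff i).2
      have hsmul : (r.coeff i • x ^ i : R) = (r.coeff i : R) * x ^ i := by
        rw [Algebra.smul_def]; rfl
      rw [hsmul]
      have hmem : (r.coeff i : R) * x ^ i
          ∈ Submodule.map (LinearMap.mulRight K (x ^ i)) (Submodule.span K (MS k)) :=
        Submodule.mem_map_of_mem hcoeff
      rw [Submodule.map_span] at hmem
      refine Submodule.span_le.mpr ?_ hmem
      rintro w ⟨w', ⟨a, hab, hasupp, rfl⟩, rfl⟩
      apply Submodule.subset_span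
      refine ⟨Function.update a ⟨k, hk⟩ i, ?_, ?_, ?_⟩
      · intro j
        rcases eq_or_ne j ⟨k, hk⟩ with rfl | hj
        · simpa [Function.update_self] using by omega
        · rw [Function.update_of_ne hj]; exact hab j
      · intro j hj
        have hjk : j ≠ ⟨k, hk⟩ := by
          intro hjj; rw [hjj] at hj; simp at hj
        rw [Function.update_of_ne hjk]
        exact hasupp j (by omega)
      · rw [LinearMap.mulRight_apply]
        rw [← Finset.mul_prod_erase Finset.univ _ (Finset.mem_univ (⟨k, hk⟩ : Fin n)),
          ← Finset.mul_prod_erase Finset.univ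
            (fun j => y j ^ (Function.update a ⟨k, hk⟩ i) j) (Finset.mem_univ (⟨k, hk⟩ : Fin n))]
        rw [Function.update_self, hasupp ⟨k, hk⟩ (le_refl k), pow_zero, one_mul]
        rw [mul_comm _ (x ^ i), hx]
        congr 1
        apply Finset.prod_congr rfl
        intro j hj
        rw [Function.update_of_ne (Finset.ne_of_mem_erase hj)]
  have hfin : Subalgebra.toSubmodule (Algebra.adjoin K (y '' {j : Fin n | (j : ℕ) < n}))
      ≤ Submodule.span K (MS n) := key n le_rfl
  have himg : y '' {j : Fin n | (j : ℕ) < n} = Set.range y := by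
    rw [show {j : Fin n | (j : ℕ) < n} = Set.univ by ext j; simp [j.isLt], Set.image_univ]
  rw [himg, hgen] at hfin
  apply le_antisymm le_top
  refine le_trans (fun z hz => hfin ?_) (Submodule.span_mono ?_)
  · exact hz
  · rintro w ⟨a, hab, _, rfl⟩
    exact ⟨a, hab, rfl⟩

section AuxLemmas
open Polynomial Finset

theorem coeff_prod_X_sub_C' {R : Type*} [CommRing R] [Algebra ℂ R] {n : ℕ} (f : Fin n → R)
    {l : ℕ} (hl : l ≤ n) :
    (∏ j : Fin n, (X - C (f j))).coeff l
      = (-1) ^ (n - l) * MvPolynomial.aeval f (MvPolynomial.esymm (Fin n) ℂ (n - l)) := by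
  have hcard : Multiset.card (Finset.univ.val.map f) = n := by simp
  have h1 : (∏ j : Fin n, (X - C (f j)))
      = ((Finset.univ.val.map f).map fun t => X - C t).prod := by
    rw [Multiset.map_map]; rfl
  rw [h1, Multiset.prod_X_sub_C_coeff _ (by rw [hcard]; exact hl), hcard,
    MvPolynomial.aeval_esymm_eq_multiset_esymm]

theorem natDegree_prod_X_sub_C' {R : Type*} [CommRing R] [Nontrivial R] {n : ℕ} (f : Fin n → R) :
    (∏ j : Fin n, (X - C (f j))).natDegree = n := by
  rw [Polynomial.natDegree_prod_of_monic _ _ (fun _ _ => monic_X_sub_C _)]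
  simp

theorem esymm_vals {n : ℕ} (hn : 1 ≤ n) {w : ℂ} (hw : w ^ n = (-1 : ℂ) ^ (n + 1)) :
    (∀ l, 1 ≤ l → l ≤ n - 1 →
      MvPolynomial.aeval (fun i : Fin n => Complex.exp (2 * Real.pi * Complex.I / n) ^ (i : ℕ) * w)
        (MvPolynomial.esymm (Fin n) ℂ l) = 0)
    ∧ MvPolynomial.aeval
        (fun i : Fin n => Complex.exp (2 * Real.pi * Complex.I / n) ^ (i : ℕ) * w)
        (MvPolynomial.esymm (Fin n) ℂ n) = 1 := by
  have hn0 : n ≠ 0 := by omega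
  set ζ := Complex.exp (2 * Real.pi * Complex.I / n) with hζdef
  have hζ : IsPrimitiveRoot ζ n := Complex.isPrimitiveRoot_exp n hn0
  set f : Fin n → ℂ := fun i => ζ ^ (i : ℕ) * w with hf
  have hprod : (∏ j : Fin n, (X - C (f j))) = X ^ n - C ((-1 : ℂ) ^ (n + 1)) := by
    rw [show (∏ j : Fin n, (X - C (f j))) = ∏ i ∈ range n, (X - C (ζ ^ i * w)) from
      Fin.prod_univ_eq_prod_range (fun i => X - C (ζ ^ i * w)) n]
    rw [← X_pow_sub_C_eq_prod hζ (by omega) hw]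
  constructor
  · intro l hl1 hl2
    have h := coeff_prod_X_sub_C' f (l := n - l) (by omega)
    rw [show n - (n - l) = l by omega, hprod] at h
    rw [Polynomial.coeff_sub, Polynomial.coeff_X_pow, if_neg (by omega), Polynomial.coeff_C,
      if_neg (by omega), sub_zero] at h
    rcases mul_eq_zero.mp h.symm with h2 | h2
    · exact absurd h2 (pow_ne_zero _ (by norm_num))
    · exact h2
  · have h := coeff_prod_X_sub_C' f (l := 0) (by omega)
    rw [Nat.sub_zero, hprod] at h
    rw [Polynomial.coeff_sub, Polynomial.coeff_X_pow, if_neg (by omega), Polynomial.coeff_C,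
      if_pos rfl, zero_sub] at h
    have hsq : ((-1 : ℂ)) ^ n * ((-1 : ℂ)) ^ n = 1 := by
      rw [← pow_add]; exact Even.neg_one_pow ⟨n, by ring⟩
    have h2 : (-1 : ℂ) ^ n * (-(-1 : ℂ) ^ (n + 1))
        = MvPolynomial.aeval f (MvPolynomial.esymm (Fin n) ℂ n) := by
      rw [h, ← mul_assoc, hsq, one_mul]
    rw [← h2]
    calc (-1 : ℂ) ^ n * (-(-1 : ℂ) ^ (n + 1)) = (-1 : ℂ) ^ n * ((-1 : ℂ) ^ (n + 2)) := by
          rw [pow_succ (-1 : ℂ) (n + 1)]; ring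
      _ = (-1 : ℂ) ^ (n + (n + 2)) := (pow_add _ _ _).symm
      _ = 1 := Even.neg_one_pow ⟨n + 1, by ring⟩

end AuxLemmas

open MvPolynomial

open Polynomial Finset in
/-- in `ℂ[x_1, …, x_n]`, the ideal generated by `e_1, …, e_{n-1}` and
`e_n − 1` is radical, and the quotient is an `n!`-dimensional complex vector space. -/
theorem sln_scheme_reduced (n : ℕ) (hn : 1 ≤ n)
    (I : Ideal (MvPolynomial (Fin n) ℂ))
    (hI : I = Ideal.span
      ((fun k => esymm (Fin n) ℂ k) '' {k | 1 ≤ k ∧ k ≤ n - 1} ∪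
        {esymm (Fin n) ℂ n - 1})) :
    I.IsRadical ∧ Module.finrank ℂ (MvPolynomial (Fin n) ℂ ⧸ I) = Nat.factorial n := by
  classical
  have hn0 : n ≠ 0 := by omega
  set ζ : ℂ := Complex.exp (2 * Real.pi * Complex.I / n) with hζdef
  have hζ : IsPrimitiveRoot ζ n := Complex.isPrimitiveRoot_exp n hn0
  obtain ⟨w, hw⟩ : ∃ w : ℂ, w ^ n = (-1 : ℂ) ^ (n + 1) :=
    IsAlgClosed.exists_pow_nat_eq _ (by omega)
  have hw0 : w ≠ 0 := by
    intro h; rw [h, zero_pow hn0] at hw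
    exact absurd hw.symm (pow_ne_zero _ (by norm_num))
  set pts0 : Fin n → ℂ := fun i => ζ ^ (i : ℕ) * w with hpts0
  obtain ⟨hval1, hvaln⟩ := esymm_vals hn hw
  set pts : Equiv.Perm (Fin n) → Fin n → ℂ := fun σ i => pts0 (σ i) with hpts
  set ε : Equiv.Perm (Fin n) → (MvPolynomial (Fin n) ℂ →ₐ[ℂ] ℂ) := fun σ => MvPolynomial.aeval (pts σ) with hε
  have hsurj : ∀ σ, Function.Surjective (ε σ) := by
    intro σ c
    exact ⟨MvPolynomial.C c, by simp [hε, MvPolynomial.aeval_C]⟩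
  set m : Equiv.Perm (Fin n) → Ideal (MvPolynomial (Fin n) ℂ) := fun σ => RingHom.ker (ε σ) with hm
  -- evaluation of esymm at permuted points
  have hperm : ∀ σ : Equiv.Perm (Fin n), ∀ l : ℕ,
      MvPolynomial.aeval (pts σ) (esymm (Fin n) ℂ l)
        = MvPolynomial.aeval pts0 (esymm (Fin n) ℂ l) := by
    intro σ l
    rw [MvPolynomial.aeval_esymm_eq_multiset_esymm, MvPolynomial.aeval_esymm_eq_multiset_esymm]
    congr 1
    have h1 : Finset.univ.val.map (pts σ) = (Finset.univ.val.map ⇑σ).map pts0 := by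
      rw [Multiset.map_map]; rfl
    have h2 : Finset.univ.val.map ⇑σ = Finset.univ.val := by
      have := congrArg Finset.val (Finset.map_univ_equiv σ)
      rwa [Finset.map_val] at this
    rw [h1, h2]
  have hIker : ∀ σ, I ≤ m σ := by
    intro σ
    rw [hI, Ideal.span_le]
    rintro g (⟨l, ⟨hl1, hl2⟩, rfl⟩ | rfl)
    · have : ε σ (esymm (Fin n) ℂ l) = 0 := by
        rw [hε]; exact (hperm σ l).trans (hval1 l hl1 hl2)
      simpa [hm, RingHom.mem_ker] using this
    · have : ε σ (esymm (Fin n) ℂ n - 1) = 0 := by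
        rw [hε, map_sub, map_one, hperm σ n, hvaln, sub_self]
      simpa [hm, RingHom.mem_ker] using this
  have hmax : ∀ σ, (m σ).IsMaximal := fun σ =>
    RingHom.ker_isMaximal_of_surjective (ε σ) (hsurj σ)
  have hptsinj : ∀ σ τ, pts σ = pts τ → σ = τ := by
    intro σ τ h
    apply Equiv.ext
    intro i
    have := congrFun h i
    rw [hpts] at this
    simp only [hpts0] at this
    have h2 : ζ ^ ((σ i : Fin n) : ℕ) = ζ ^ ((τ i : Fin n) : ℕ) := mul_right_cancel₀ hw0 this
    exact Fin.ext (hζ.pow_inj (σ i).isLt (τ i).isLt h2)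
  have hne : ∀ σ τ, σ ≠ τ → m σ ≠ m τ := by
    intro σ τ hst heq
    apply hst
    apply hptsinj
    funext i
    have hmem : (MvPolynomial.X i - MvPolynomial.C (pts σ i) : MvPolynomial (Fin n) ℂ) ∈ m σ := by
      simp [hm, RingHom.mem_ker, hε, MvPolynomial.aeval_X, MvPolynomial.aeval_C, sub_self]
    rw [heq] at hmem
    have := RingHom.mem_ker.mp hmem
    rw [hε] at this
    simp only [map_sub, MvPolynomial.aeval_X, MvPolynomial.aeval_C,
      Algebra.algebraMap_self_apply] at this
    linear_combination -this
  set J : Ideal (MvPolynomial (Fin n) ℂ) := ⨅ σ, m σ with hJ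
  have hIJ : I ≤ J := le_iInf hIker
  have hInetop : I ≠ ⊤ := fun h =>
    (hmax 1).ne_top (top_le_iff.mp (h ▸ hIker 1))
  haveI : Nontrivial (MvPolynomial (Fin n) ℂ ⧸ I) := Ideal.Quotient.nontrivial_iff.mpr hInetop
  -- the generators y
  set y : Fin n → (MvPolynomial (Fin n) ℂ ⧸ I) := fun i => Ideal.Quotient.mk I (MvPolynomial.X i) with hy
  have hmkaeval : (MvPolynomial.aeval y : MvPolynomial (Fin n) ℂ →ₐ[ℂ] MvPolynomial (Fin n) ℂ ⧸ I) = Ideal.Quotient.mkₐ ℂ I := by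
    apply MvPolynomial.algHom_ext
    intro i
    simp [hy]
  have hmk : ∀ q : MvPolynomial (Fin n) ℂ, MvPolynomial.aeval y q = Ideal.Quotient.mk I q := by
    intro q
    rw [hmkaeval]; rfl
  have hesymm_mid : ∀ l, 1 ≤ l → l ≤ n - 1 →
      Ideal.Quotient.mk I (esymm (Fin n) ℂ l) = 0 := by
    intro l h1 h2
    rw [Ideal.Quotient.eq_zero_iff_mem, hI]
    exact Ideal.subset_span (Or.inl ⟨l, ⟨h1, h2⟩, rfl⟩)
  have hesymm_top : Ideal.Quotient.mk I (esymm (Fin n) ℂ n) = 1 := by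
    have : Ideal.Quotient.mk I (esymm (Fin n) ℂ n - 1) = 0 := by
      rw [Ideal.Quotient.eq_zero_iff_mem, hI]
      exact Ideal.subset_span (Or.inr rfl)
    rw [map_sub, map_one, sub_eq_zero] at this
    exact this
  have hprodQ : (∏ j : Fin n, (Polynomial.X - Polynomial.C (y j)))
      = Polynomial.X ^ n + Polynomial.C (algebraMap ℂ (MvPolynomial (Fin n) ℂ ⧸ I) ((-1 : ℂ) ^ n)) := by
    apply Polynomial.ext
    intro l
    rcases le_or_gt l n with hl | hl
    · rw [coeff_prod_X_sub_C' y hl, Polynomial.coeff_add, Polynomial.coeff_X_pow,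
        Polynomial.coeff_C]
      rcases eq_or_lt_of_le hl with rfl | hln
      · rw [if_pos rfl, if_neg (by omega), Nat.sub_self, MvPolynomial.esymm_zero,
          pow_zero, one_mul, map_one, add_zero]
      · rcases Nat.eq_zero_or_pos l with rfl | hl0
        · rw [if_neg (by omega), if_pos rfl, Nat.sub_zero, hmk, hesymm_top, mul_one,
            zero_add, map_pow, map_neg, map_one]
        · rw [if_neg (by omega), if_neg (by omega), hmk, hesymm_mid (n - l) (by omega) (by omega),
            mul_zero, add_zero]
    · rw [Polynomial.coeff_eq_zero_of_natDegree_lt (by rw [natDegree_prod_X_sub_C' y]; exact hl),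
        Polynomial.coeff_add, Polynomial.coeff_X_pow, if_neg (by omega), Polynomial.coeff_C,
        if_neg (by omega), add_zero]
  have hgenQ : Algebra.adjoin ℂ (Set.range y) = ⊤ := by
    have h1 : Set.range y = ⇑(Ideal.Quotient.mkₐ ℂ I) '' Set.range MvPolynomial.X := by
      rw [← Set.range_comp]; rfl
    rw [h1, ← AlgHom.map_adjoin, MvPolynomial.adjoin_range_X, Algebra.map_top]
    rw [AlgHom.range_eq_top]
    exact Ideal.Quotient.mkₐ_surjective ℂ I
  have hspan := span_monomials_top y hgenQ ((-1 : ℂ) ^ n) hprodQ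
  -- upper bound on finrank
  set v : (∀ j : Fin n, Fin (n - (j : ℕ))) → (MvPolynomial (Fin n) ℂ ⧸ I) :=
    fun a => ∏ j, y j ^ ((a j : ℕ)) with hv
  have hvspan : Submodule.span ℂ (Set.range v) = ⊤ := by
    apply le_antisymm le_top
    rw [← hspan]
    apply Submodule.span_le.mpr
    rintro z ⟨a, hab, rfl⟩
    exact Submodule.subset_span ⟨fun j => ⟨a j, by have := hab j; omega⟩, rfl⟩
  haveI hfd : Module.Finite ℂ (MvPolynomial (Fin n) ℂ ⧸ I) :=
    ⟨by rw [← hvspan]; exact Submodule.fg_span (Set.finite_range v)⟩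
  have hcardv : Fintype.card (∀ j : Fin n, Fin (n - (j : ℕ))) = Nat.factorial n := by
    rw [Fintype.card_pi]
    simp only [Fintype.card_fin]
    rw [Fin.prod_univ_eq_prod_range (fun j => n - j) n]
    rw [← Finset.prod_range_add_one_eq_factorial n]
    rw [← Finset.prod_range_reflect (fun x => x + 1) n]
    apply Finset.prod_congr rfl
    intro j hj
    rw [Finset.mem_range] at hj
    omega
  have hupper : Module.finrank ℂ (MvPolynomial (Fin n) ℂ ⧸ I) ≤ Nat.factorial n := by
    rw [← hcardv]
    exact finrank_le_of_span_eq_top hvspan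
  -- lower bound via CRT
  have hcop : Pairwise (Function.onFun IsCoprime m) := fun σ τ hst =>
    Ideal.isCoprime_iff_sup_eq.mpr (Ideal.IsMaximal.coprime_of_ne (hmax σ) (hmax τ) (hne σ τ hst))
  set E := Ideal.quotientInfRingEquivPiQuotient m hcop with hE
  have hEalgmap : ∀ c : ℂ, E (algebraMap ℂ (MvPolynomial (Fin n) ℂ ⧸ J) c)
      = algebraMap ℂ (∀ σ, MvPolynomial (Fin n) ℂ ⧸ m σ) c := by
    intro c
    have h1 : algebraMap ℂ (MvPolynomial (Fin n) ℂ ⧸ J) c = Ideal.Quotient.mk J (algebraMap ℂ (MvPolynomial (Fin n) ℂ) c) := rfl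
    rw [h1]
    have h2 : E (Ideal.Quotient.mk J (algebraMap ℂ (MvPolynomial (Fin n) ℂ) c))
        = fun σ => Ideal.Quotient.mk (m σ) (algebraMap ℂ (MvPolynomial (Fin n) ℂ) c) :=
      Ideal.quotientInfToPiQuotient_mk m (algebraMap ℂ (MvPolynomial (Fin n) ℂ) c)
    rw [h2]
    rfl
  set Ealg : (MvPolynomial (Fin n) ℂ ⧸ J) ≃ₐ[ℂ] (∀ σ, MvPolynomial (Fin n) ℂ ⧸ m σ) := AlgEquiv.ofRingEquiv hEalgmap with hEalg
  set e2 : ∀ σ : Equiv.Perm (Fin n), (MvPolynomial (Fin n) ℂ ⧸ m σ) ≃ₐ[ℂ] ℂ :=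
    fun σ => Ideal.quotientKerAlgEquivOfSurjective (hsurj σ) with he2
  set L : (MvPolynomial (Fin n) ℂ ⧸ J) ≃ₗ[ℂ] (Equiv.Perm (Fin n) → ℂ) :=
    Ealg.toLinearEquiv ≪≫ₗ LinearEquiv.piCongrRight (fun σ => (e2 σ).toLinearEquiv) with hL
  have hJrank : Module.finrank ℂ (MvPolynomial (Fin n) ℂ ⧸ J) = Nat.factorial n := by
    rw [L.finrank_eq, Module.finrank_pi, Fintype.card_perm, Fintype.card_fin]
  -- the factor map
  set φ : (MvPolynomial (Fin n) ℂ ⧸ I) →ₐ[ℂ] (MvPolynomial (Fin n) ℂ ⧸ J) := Ideal.Quotient.liftₐ I (Ideal.Quotient.mkₐ ℂ J)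
    (fun a ha => by
      rw [Ideal.Quotient.mkₐ_eq_mk, Ideal.Quotient.eq_zero_iff_mem]
      exact hIJ ha) with hφ
  have hφmk : ∀ q : MvPolynomial (Fin n) ℂ, φ (Ideal.Quotient.mk I q) = Ideal.Quotient.mk J q := by
    intro q
    rw [hφ, Ideal.Quotient.liftₐ_apply]
    rfl
  have hφsurj : Function.Surjective φ := by
    intro z
    obtain ⟨x, rfl⟩ := Ideal.Quotient.mk_surjective z
    exact ⟨Ideal.Quotient.mk I x, hφmk x⟩
  have hrk := LinearMap.finrank_range_add_finrank_ker φ.toLinearMap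
  have hrange : LinearMap.range φ.toLinearMap = ⊤ := LinearMap.range_eq_top.mpr hφsurj
  rw [hrange, finrank_top, hJrank] at hrk
  have hkerrank : Module.finrank ℂ (LinearMap.ker φ.toLinearMap) = 0 := by omega
  have hkerbot : LinearMap.ker φ.toLinearMap = ⊥ :=
    Submodule.finrank_eq_zero.mp hkerrank
  have hφinj : Function.Injective φ := LinearMap.ker_eq_bot.mp hkerbot
  have hIJeq : I = J := by
    apply le_antisymm hIJ
    intro x hx
    have h1 : φ (Ideal.Quotient.mk I x) = 0 := by
      rw [hφmk, Ideal.Quotient.eq_zero_iff_mem]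
      exact hx
    have h2 : Ideal.Quotient.mk I x = 0 := by
      apply hφinj
      rw [h1, map_zero]
    rwa [← Ideal.Quotient.eq_zero_iff_mem]
  constructor
  · rw [hIJeq, hJ]
    exact Ideal.isRadical_iInf m (fun σ => (hmax σ).isPrime.isRadical)
  · omega
end

section
/- Let n ≥ 1 and let ζ_1, ..., ζ_n ∈ ℂ be pairwise distinct with ζ_i^n = (−1)^{n−1} for every i. Then for all integers 0 ≤ k ≤ d ≤ n, e_k(conj(ζ_1), ..., conj(ζ_d)) = (ζ_{d+1}·ζ_{d+2}···ζ_n) · e_{d−k}(ζ_1, ..., ζ_d), where conj denotes complex conjugation. -/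
noncomputable def esymmVal (n k : ℕ) (x : Fin n → ℂ) : ℂ :=
  ∑ t ∈ Finset.powersetCard k Finset.univ, ∏ i ∈ t, x i

lemma prod_roots_one (n : ℕ) (hn : 1 ≤ n) (ζ : Fin n → ℂ)
    (hinj : Function.Injective ζ) (hroot : ∀ i, ζ i ^ n = (-1 : ℂ) ^ (n - 1)) :
    ∏ i, ζ i = 1 := by
  set c : ℂ := (-1) ^ (n - 1) with hc
  set p : Polynomial ℂ := Polynomial.X ^ n - Polynomial.C c with hp
  have hmo : p.Monic := Polynomial.monic_X_pow_sub_C _ (by omega)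
  have hsplit : p.Splits := IsAlgClosed.splits p
  have hdeg : p.natDegree = n := Polynomial.natDegree_X_pow_sub_C
  have hcard : Multiset.card p.roots = n := by
    rw [← hdeg]; exact (Polynomial.splits_iff_card_roots).1 hsplit
  have hle : (Finset.univ.val.map ζ) ≤ p.roots := by
    rw [Multiset.le_iff_count]
    intro a
    by_cases ha : a ∈ Finset.univ.val.map ζ
    · obtain ⟨i, _, rfl⟩ := Multiset.mem_map.1 ha
      have h1 : Multiset.count (ζ i) (Finset.univ.val.map ζ) = 1 := by
        rw [Multiset.count_map_eq_count' ζ _ hinj]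
        exact Multiset.count_eq_one_of_mem Finset.univ.nodup (Finset.mem_univ i)
      rw [h1]
      have : ζ i ∈ p.roots := by
        rw [Polynomial.mem_roots hmo.ne_zero]
        simp [hp, Polynomial.IsRoot, hroot i]
      exact Multiset.one_le_count_iff_mem.2 this
    · rw [Multiset.count_eq_zero_of_notMem ha]; omega
  have heq : Finset.univ.val.map ζ = p.roots :=
    Multiset.eq_of_le_of_card_le hle (by rw [hcard, Multiset.card_map]; simp)
  have hprod : p.roots.prod = (∏ i, ζ i) := by rw [← heq]; rfl
  have h0 : p.coeff 0 = -c := by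
    simp only [hp, Polynomial.coeff_sub, Polynomial.coeff_X_pow, Polynomial.coeff_C_zero]
    rw [if_neg (by omega)]; ring
  have key := hsplit.coeff_zero_eq_prod_roots_of_monic hmo
  rw [h0, hdeg, hprod] at key
  have h1 : (-1:ℂ)^(n-1) * (-1) = (-1)^n := by
    rw [← pow_succ]; congr 1; omega
  have hcn : (-1:ℂ)^n = -c := by rw [hc, ← h1]; ring
  have hne : ((-1:ℂ)^n) ≠ 0 := pow_ne_zero _ (by norm_num)
  rw [← hcn] at key
  have : (-1:ℂ)^n * ∏ i, ζ i = (-1:ℂ)^n * 1 := by rw [mul_one, ← key]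
  exact mul_left_cancel₀ hne this

lemma esymm_inv (d k : ℕ) (hkd : k ≤ d) (x : Fin d → ℂ) (hx : ∀ i, x i ≠ 0) :
    (∏ i, x i) * esymmVal d k (fun i => (x i)⁻¹) = esymmVal d (d - k) x := by
  unfold esymmVal
  rw [Finset.mul_sum]
  refine Finset.sum_nbij' (fun t => tᶜ) (fun s => sᶜ) ?_ ?_ ?_ ?_ ?_
  · intro t ht
    rw [Finset.mem_powersetCard_univ] at ht ⊢
    rw [Finset.card_compl, ht, Fintype.card_fin]
  · intro s hs
    rw [Finset.mem_powersetCard_univ] at hs ⊢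
    rw [Finset.card_compl, hs, Fintype.card_fin]
    omega
  · intro t _; exact compl_compl t
  · intro s _; exact compl_compl s
  · intro t ht
    have h1 : (∏ i ∈ t, x i) ≠ 0 := Finset.prod_ne_zero_iff.2 fun i _ => hx i
    calc (∏ i, x i) * ∏ i ∈ t, (x i)⁻¹
        = ((∏ i ∈ tᶜ, x i) * (∏ i ∈ t, x i)) * (∏ i ∈ t, x i)⁻¹ := by
          rw [Finset.prod_compl_mul_prod, Finset.prod_inv_distrib]
      _ = ∏ i ∈ tᶜ, x i := by field_simp

/-- if `ζ_1, …, ζ_n` are pairwise distinct `n`-th roots of `(-1)^(n-1)`,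
then for `0 ≤ k ≤ d ≤ n`,
`e_k(conj ζ_1, …, conj ζ_d) = (ζ_{d+1} ⋯ ζ_n) · e_{d-k}(ζ_1, …, ζ_d)`. -/
theorem conj_esymm_grassmannian (n : ℕ) (hn : 1 ≤ n) (ζ : Fin n → ℂ)
    (hinj : Function.Injective ζ) (hroot : ∀ i, ζ i ^ n = (-1 : ℂ) ^ (n - 1))
    (k d : ℕ) (hkd : k ≤ d) (hdn : d ≤ n) :
    esymmVal d k (fun i => starRingEnd ℂ (ζ (Fin.castLE hdn i))) =
      (∏ i ∈ Finset.univ.filter (fun i : Fin n => d ≤ (i : ℕ)), ζ i) *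
        esymmVal d (d - k) (fun i => ζ (Fin.castLE hdn i)) := by
  have hne : ∀ i : Fin n, ζ i ≠ 0 := by
    intro i h
    have := hroot i
    rw [h, zero_pow (by omega)] at this
    have : ((-1 : ℂ) ^ (n - 1)) ≠ 0 := pow_ne_zero _ (by norm_num)
    simp_all
  have habs : ∀ i : Fin n, ‖ζ i‖ = 1 := by
    intro i
    have h1 : ‖ζ i‖ ^ n = 1 := by
      rw [← norm_pow, hroot i, norm_pow]
      simp
    exact (pow_eq_one_iff_of_nonneg (norm_nonneg _) (by omega : n ≠ 0)).1 h1
  have hconj : ∀ i : Fin n, (starRingEnd ℂ) (ζ i) = (ζ i)⁻¹ := by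
    intro i
    have h2 : ζ i * (starRingEnd ℂ) (ζ i) = 1 := by
      rw [Complex.mul_conj, Complex.normSq_eq_norm_sq, habs i]
      norm_num
    exact eq_inv_of_mul_eq_one_right h2
  set x : Fin d → ℂ := fun i => ζ (Fin.castLE hdn i) with hx
  have hxne : ∀ i, x i ≠ 0 := fun i => hne _
  have hA := esymm_inv d k hkd x hxne
  have hxconj : (fun i => starRingEnd ℂ (ζ (Fin.castLE hdn i))) = fun i => (x i)⁻¹ := by
    funext i; exact hconj _
  rw [hxconj]
  -- product split
  have hsplit : (∏ i ∈ Finset.univ.filter (fun i : Fin n => d ≤ (i : ℕ)), ζ i) * (∏ i, x i) = 1 := by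
    have himg : Finset.univ.filter (fun i : Fin n => ¬ d ≤ (i : ℕ))
        = Finset.image (Fin.castLE hdn) Finset.univ := by
      ext j
      simp only [Finset.mem_filter, Finset.mem_univ, true_and, Finset.mem_image, not_le]
      constructor
      · intro h; exact ⟨⟨(j : ℕ), h⟩, Fin.ext rfl⟩
      · rintro ⟨i, rfl⟩; exact i.isLt.trans_le le_rfl
    have hfirst : ∏ i, x i = ∏ i ∈ Finset.univ.filter (fun i : Fin n => ¬ d ≤ (i : ℕ)), ζ i := by
      rw [himg, Finset.prod_image (fun a _ b _ h => Fin.castLE_injective hdn h)]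
    rw [hfirst, mul_comm, Finset.prod_filter_not_mul_prod_filter]
    exact prod_roots_one n hn ζ hinj hroot
  have hP : (∏ i, x i) ≠ 0 := Finset.prod_ne_zero_iff.2 fun i _ => hxne i
  calc esymmVal d k (fun i => (x i)⁻¹)
      = ((∏ i ∈ Finset.univ.filter (fun i : Fin n => d ≤ (i : ℕ)), ζ i) * (∏ i, x i))
        * esymmVal d k (fun i => (x i)⁻¹) := by rw [hsplit, one_mul]
    _ = (∏ i ∈ Finset.univ.filter (fun i : Fin n => d ≤ (i : ℕ)), ζ i) * esymmVal d (d - k) x := by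
        rw [mul_assoc, hA]
end

section
/- Let n ≥ 1 and let x = (x_0, x_1, ..., x_n) ∈ ℂ^{n+1}. Then x satisfies e_k(x_0², x_1², ..., x_n²) = 0 for all 1 ≤ k ≤ n−1, e_n(x_0², ..., x_n²) = 4, and x_0·x_1···x_n = 0, if and only if exactly one coordinate x_i is zero and the squares x_j² of the remaining n coordinates are pairwise distinct and satisfy (x_j²)^n = (−1)^{n−1}·4. -/
open Polynomial Finset

lemma esymm_cons_zero' {R : Type*} [CommRing R] (s : Multiset R) (k : ℕ) :
    ((0:R) ::ₘ s).esymm (k+1) = s.esymm (k+1) := by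
  simp [Multiset.esymm, Multiset.map_map, Function.comp]

lemma neg_one_pow_pred' {n : ℕ} (hn : 1 ≤ n) : ((-1:ℂ))^n = -((-1:ℂ))^(n-1) := by
  obtain ⟨m, rfl⟩ := Nat.exists_eq_add_of_le hn
  simp [pow_succ, pow_add]

lemma prod_eq_of_esymm' (n : ℕ) (hn : 1 ≤ n) (M : Multiset ℂ) (hcard : Multiset.card M = n)
    (h1 : ∀ k, 1 ≤ k → k ≤ n - 1 → M.esymm k = 0) (h2 : M.esymm n = 4) :
    (M.map fun a => X - C a).prod = X ^ n + C ((-1:ℂ)^n * 4) := by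
  set c : ℂ := (-1:ℂ)^n * 4 with hcdef
  set P : ℂ[X] := (M.map fun a => X - C a).prod with hP
  have hmonic : P.Monic := monic_multiset_prod_of_monic _ _ (fun a _ => monic_X_sub_C a)
  have hdeg : P.natDegree = n := by
    rw [hP, natDegree_multiset_prod_X_sub_C_eq_card, hcard]
  ext k
  rw [coeff_add, coeff_X_pow, coeff_C]
  rcases lt_trichotomy k n with hk | hk | hk
  · have hc := Multiset.prod_X_sub_C_coeff M (show k ≤ Multiset.card M by omega)
    rw [hcard, ← hP] at hc
    rw [hc]
    rcases Nat.eq_zero_or_pos k with rfl | hk0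
    · rw [Nat.sub_zero, h2, if_neg (by omega), if_pos rfl, zero_add, hcdef]
    · rw [h1 (n - k) (by omega) (by omega), if_neg (by omega), if_neg (by omega), add_zero,
        mul_zero]
  · subst hk
    rw [hmonic.coeff_natDegree.symm.trans (by rw [hdeg]), if_pos rfl, if_neg (by omega), add_zero]
  · rw [coeff_eq_zero_of_natDegree_lt (by omega : P.natDegree < k), if_neg (by omega),
      if_neg (by omega), add_zero]

lemma prod_eq_of_roots' (n : ℕ) (hn : 1 ≤ n) (M : Multiset ℂ) (hcard : Multiset.card M = n)
    (hnd : M.Nodup) (hroot : ∀ a ∈ M, a ^ n = (-1:ℂ)^(n-1) * 4) :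
    (M.map fun a => X - C a).prod = X ^ n - C ((-1:ℂ)^(n-1) * 4) := by
  classical
  set d : ℂ := (-1)^(n-1) * 4 with hd
  set T : ℂ[X] := X ^ n - C d with hT
  have hTm : T.Monic := monic_X_pow_sub_C _ (by omega)
  have hTd : T.natDegree = n := natDegree_X_pow_sub_C
  have hle : M ≤ T.roots := by
    rw [Multiset.le_iff_count]
    intro a
    by_cases ha : a ∈ M
    · rw [Multiset.count_eq_one_of_mem hnd ha, count_roots]
      refine (rootMultiplicity_pos hTm.ne_zero).mpr ?_
      simp [hT, IsRoot, hroot a ha]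
    · simp [Multiset.count_eq_zero_of_notMem ha]
  have hMr : M = T.roots := Multiset.eq_of_le_of_card_le hle
    (by rw [hcard]; exact (Polynomial.card_roots' T).trans_eq hTd)
  rw [hMr]
  exact ((IsAlgClosed.splits T).eq_prod_roots_of_monic hTm).symm

/-- description of the zero locus `Z(so_{2n+2})`: a tuple
`x ∈ ℂ^{n+1}` satisfies `E_k(x) = 0` for `1 ≤ k ≤ n-1`, `E_n(x) = 4` and
`x_0 ⋯ x_n = 0` iff exactly one coordinate vanishes and the squares of the
remaining `n` coordinates are pairwise distinct `n`-th roots of `(-1)^(n-1)·4`. -/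
theorem zero_locus_so (n : ℕ) (hn : 1 ≤ n) (x : Fin (n + 1) → ℂ) :
    ((∀ k, 1 ≤ k → k ≤ n - 1 → esymmVal (n + 1) k (fun i => x i ^ 2) = 0) ∧
        esymmVal (n + 1) n (fun i => x i ^ 2) = 4 ∧ (∏ i, x i) = 0) ↔
      ((∃! i, x i = 0) ∧
        (∀ j l, x j ≠ 0 → x l ≠ 0 → j ≠ l → x j ^ 2 ≠ x l ^ 2) ∧
        (∀ j, x j ≠ 0 → (x j ^ 2) ^ n = (-1 : ℂ) ^ (n - 1) * 4)) := by
  classical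
  set y : Fin (n+1) → ℂ := fun i => x i ^ 2 with hy
  have huniv : ∀ i₀ : Fin (n+1),
      (Finset.univ : Finset (Fin (n+1))).val = i₀ ::ₘ (Finset.univ.erase i₀).val := fun i₀ => by
    rw [Finset.erase_val, Multiset.cons_erase (Finset.mem_val.mpr (Finset.mem_univ i₀))]
  have hesymm : ∀ i₀ : Fin (n+1), x i₀ = 0 → ∀ k : ℕ,
      esymmVal (n+1) (k+1) y = ((Finset.univ.erase i₀).val.map y).esymm (k+1) := by
    intro i₀ h0 k
    have h1 : esymmVal (n+1) (k+1) y = (Finset.univ.val.map y).esymm (k+1) :=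
      (Finset.esymm_map_val y Finset.univ (k+1)).symm
    rw [h1, huniv i₀, Multiset.map_cons, show y i₀ = 0 by simp [hy, h0], esymm_cons_zero']
  have hcardM : ∀ i₀ : Fin (n+1), Multiset.card ((Finset.univ.erase i₀).val.map y) = n := by
    intro i₀
    rw [Multiset.card_map]
    simp [Finset.card_erase_of_mem]
  have hprodP : ∀ i₀ : Fin (n+1), ((((Finset.univ.erase i₀).val.map y).map (fun a => X - C a)).prod)
      = ∏ i ∈ Finset.univ.erase i₀, (X - C (y i)) := fun i₀ => by
    rw [Multiset.map_map, Finset.prod_eq_multiset_prod]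
    rfl
  constructor
  · rintro ⟨h1, h2, h3⟩
    obtain ⟨i₀, -, h0⟩ := Finset.prod_eq_zero_iff.mp h3
    have huniq : ∀ j, x j = 0 → j = i₀ := by
      intro j hj
      by_contra hne
      have hzero : esymmVal (n+1) n y = 0 := by
        refine Finset.sum_eq_zero fun t ht => ?_
        rw [Finset.mem_powersetCard] at ht
        have hmem : i₀ ∈ t ∨ j ∈ t := by
          by_contra hc
          push_neg at hc
          have hsub : t ⊆ (Finset.univ.erase i₀).erase j := by
            intro a ha
            rw [Finset.mem_erase, Finset.mem_erase]
            exact ⟨fun h => hc.2 (h ▸ ha), fun h => hc.1 (h ▸ ha), Finset.mem_univ a⟩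
          have hcle := Finset.card_le_card hsub
          rw [ht.2, Finset.card_erase_of_mem
            (by rw [Finset.mem_erase]; exact ⟨fun h => hne (h ▸ rfl), Finset.mem_univ j⟩),
            Finset.card_erase_of_mem (Finset.mem_univ i₀)] at hcle
          simp at hcle
          omega
        rcases hmem with hi | hi
        · exact Finset.prod_eq_zero hi (by show y i₀ = 0; simp [hy, h0])
        · exact Finset.prod_eq_zero hi (by show y j = 0; simp [hy, hj])
      rw [show esymmVal (n+1) n y = esymmVal (n+1) n (fun i => x i ^ 2) from rfl, h2] at hzero
      norm_num at hzero
    set M : Multiset ℂ := (Finset.univ.erase i₀).val.map y with hM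
    have hMesymm : ∀ k, 1 ≤ k → k ≤ n - 1 → M.esymm k = 0 := by
      intro k hk1 hk2
      obtain ⟨k', rfl⟩ : ∃ k', k = k' + 1 := ⟨k - 1, by omega⟩
      rw [← hesymm i₀ h0 k']
      exact h1 _ hk1 hk2
    have hMn : M.esymm n = 4 := by
      obtain ⟨k', hk'⟩ : ∃ k', n = k' + 1 := ⟨n - 1, by omega⟩
      rw [hk', ← hesymm i₀ h0 k', ← hk']
      exact h2
    have hPeq := prod_eq_of_esymm' n hn M (hcardM i₀) hMesymm hMn
    rw [hprodP i₀] at hPeq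
    have hji : ∀ j, x j ≠ 0 → j ∈ Finset.univ.erase i₀ := by
      intro j hj
      rw [Finset.mem_erase]
      exact ⟨fun h => hj (h ▸ h0), Finset.mem_univ j⟩
    refine ⟨⟨i₀, h0, huniq⟩, ?_, ?_⟩
    · intro j l hj hl hjl heq
      set a : ℂ := x j ^ 2 with ha
      have hsub : ({j, l} : Finset (Fin (n+1))) ⊆ Finset.univ.erase i₀ := by
        intro b hb
        rw [Finset.mem_insert, Finset.mem_singleton] at hb
        rcases hb with rfl | rfl
        · exact hji _ hj
        · exact hji _ hl
      have hdvd : (X - C a) ^ 2 ∣ ∏ i ∈ Finset.univ.erase i₀, (X - C (y i)) := by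
        have h := Finset.prod_dvd_prod_of_subset _ _ (fun i => X - C (y i)) hsub
        rw [Finset.prod_pair hjl] at h
        have : y j = a := rfl
        have hyl : y l = a := heq.symm
        rw [this, hyl, ← sq] at h
        exact h
      rw [hPeq] at hdvd
      obtain ⟨q, hq⟩ := hdvd
      have hd1 : Polynomial.eval a (derivative ((X - C a) ^ 2 * q)) = 0 := by
        simp [derivative_mul, derivative_pow]
      have hd2 : Polynomial.eval a (derivative ((X : ℂ[X]) ^ n + C ((-1:ℂ)^n * 4)))
          = (n : ℂ) * a ^ (n - 1) := by
        simp [derivative_X_pow, derivative_pow, derivative_neg, derivative_one]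
      have hprod : (n : ℂ) * a ^ (n - 1) = 0 := by rw [← hd2, hq, hd1]
      have hazero : a = 0 := by
        have hn0 : (n : ℂ) ≠ 0 := Nat.cast_ne_zero.mpr (by omega)
        rcases mul_eq_zero.mp hprod with h | h
        · exact absurd h hn0
        · exact (pow_eq_zero_iff'.mp h).1
      exact hj (by simpa [ha, pow_eq_zero_iff] using hazero)
    · intro j hj
      have hmem : y j ∈ M := Multiset.mem_map.mpr ⟨j, Finset.mem_val.mpr (hji j hj), rfl⟩
      have heval : Polynomial.eval (y j) (∏ i ∈ Finset.univ.erase i₀, (X - C (y i))) = 0 := by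
        rw [Polynomial.eval_prod]
        exact Finset.prod_eq_zero (hji j hj) (by simp)
      rw [hPeq] at heval
      simp only [eval_add, eval_pow, eval_X, eval_C] at heval
      have : (y j) ^ n = -((-1:ℂ)^n * 4) := by linear_combination heval
      rw [this, neg_one_pow_pred' hn]
      ring
  · rintro ⟨⟨i₀, h0, huniq⟩, hdist, hpow⟩
    set M : Multiset ℂ := (Finset.univ.erase i₀).val.map y with hM
    have hne : ∀ j ∈ Finset.univ.erase i₀, x j ≠ 0 := by
      intro j hj h
      exact (Finset.mem_erase.mp hj).1 (huniq j h)
    have hnd : M.Nodup := by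
      refine Multiset.Nodup.map_on ?_ (Finset.univ.erase i₀).nodup
      intro a ha b hb hab
      by_contra hne'
      exact hdist a b (hne a (Finset.mem_val.mp ha)) (hne b (Finset.mem_val.mp hb)) hne' hab
    have hroot : ∀ a ∈ M, a ^ n = (-1:ℂ)^(n-1) * 4 := by
      intro a ha
      obtain ⟨j, hj, rfl⟩ := Multiset.mem_map.mp ha
      exact hpow j (hne j (Finset.mem_val.mp hj))
    have hPeq := prod_eq_of_roots' n hn M (hcardM i₀) hnd hroot
    have hcoeff : ∀ k : ℕ, k ≤ n →
        (X ^ n - C ((-1:ℂ)^(n-1) * 4)).coeff (n - k) = (-1:ℂ)^k * M.esymm k := by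
      intro k hk
      have hc := Multiset.prod_X_sub_C_coeff M (show n - k ≤ Multiset.card M by
        rw [hcardM i₀]; omega)
      rw [hcardM i₀, hPeq, show n - (n - k) = k by omega] at hc
      exact hc
    refine ⟨?_, ?_, Finset.prod_eq_zero (Finset.mem_univ i₀) h0⟩
    · intro k hk1 hk2
      obtain ⟨k', rfl⟩ : ∃ k', k = k' + 1 := ⟨k - 1, by omega⟩
      rw [show esymmVal (n+1) (k'+1) (fun i => x i ^ 2) = esymmVal (n+1) (k'+1) y from rfl,
        hesymm i₀ h0 k']
      have hc := hcoeff (k'+1) (by omega)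
      rw [coeff_sub, coeff_X_pow, coeff_C, if_neg (by omega), if_neg (by omega)] at hc
      have := hc.symm
      rw [sub_zero] at this
      rcases mul_eq_zero.mp this with h | h
      · exact absurd h (pow_ne_zero _ (by norm_num))
      · exact h
    · have hc := hcoeff n le_rfl
      rw [Nat.sub_self, coeff_sub, coeff_X_pow, coeff_C, if_neg (by omega), if_pos rfl,
        zero_sub] at hc
      have hMn : M.esymm n = 4 := by
        refine mul_left_cancel₀ (pow_ne_zero n (by norm_num : (-1:ℂ) ≠ 0)) ?_
        rw [← hc, neg_one_pow_pred' hn]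
        ring
      obtain ⟨k', hk'⟩ : ∃ k', n = k' + 1 := ⟨n - 1, by omega⟩
      have hEq := hesymm i₀ h0 k'
      rw [← hk'] at hEq
      rw [show esymmVal (n+1) n (fun i => x i ^ 2) = esymmVal (n+1) n y from rfl, hEq]
      exact hMn
end

section
/- Let n ≥ 1 and let x = (x_0, ..., x_n) ∈ ℂ^{n+1} be such that exactly one coordinate x_i is zero and the squares x_j² of the remaining coordinates are pairwise distinct and satisfy (x_j²)^n = (−1)^{n−1}·4. If σ is a permutation of {0, 1, ..., n} and ε_0, ..., ε_n ∈ {1, −1} satisfy ε_0·ε_1···ε_n = 1 and ε_i·x_{σ(i)} = x_i for all i, then σ is the identity permutation and ε_i = 1 for all i. -/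
/-- freeness of the `W(D_{n+1})`-action on `Z(so_{2n+2})`: if exactly one
coordinate of `x ∈ ℂ^{n+1}` vanishes and the squares of the remaining coordinates are
pairwise distinct `n`-th roots of `(-1)^{n-1}·4`, then the only pair `(σ, ε)` of a
permutation and signs of product `1` with `ε_i · x_{σ(i)} = x_i` for all `i` is the
trivial one. -/
theorem so_orbit_free (n : ℕ) (hn : 1 ≤ n) (x : Fin (n + 1) → ℂ)
    (hzero : ∃! i, x i = 0)
    (hdist : ∀ j l, x j ≠ 0 → x l ≠ 0 → j ≠ l → x j ^ 2 ≠ x l ^ 2)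
    (hroot : ∀ j, x j ≠ 0 → (x j ^ 2) ^ n = (-1 : ℂ) ^ (n - 1) * 4)
    (σ : Equiv.Perm (Fin (n + 1))) (ε : Fin (n + 1) → ℂ)
    (hsign : ∀ i, ε i = 1 ∨ ε i = -1) (hprod : (∏ i, ε i) = 1)
    (hfix : ∀ i, ε i * x (σ i) = x i) :
    σ = 1 ∧ ∀ i, ε i = 1 := by
  obtain ⟨i0, hi0, huniq⟩ := hzero
  have hεne : ∀ i, ε i ≠ 0 := by
    intro i
    rcases hsign i with h | h <;> rw [h] <;> norm_num
  have hσfix : ∀ i, σ i = i := by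
    intro i
    by_cases h : x i = 0
    · have hii0 : i = i0 := huniq i h
      subst hii0
      have hx : x (σ i) = 0 := by
        have h1 := hfix i
        rw [h] at h1
        exact (mul_eq_zero.mp h1).resolve_left (hεne i)
      rw [huniq _ hx]
    · by_contra hne
      have hxσ : x (σ i) ≠ 0 := by
        intro h0
        exact h (by rw [← hfix i, h0, mul_zero])
      have hε2 : ε i ^ 2 = 1 := by
        rcases hsign i with h1 | h1 <;> rw [h1] <;> ring
      have hsq : x (σ i) ^ 2 = x i ^ 2 := by
        have h2 : (ε i * x (σ i)) ^ 2 = x i ^ 2 := by rw [hfix i]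
        rw [mul_pow, hε2, one_mul] at h2
        exact h2
      exact hdist (σ i) i hxσ h hne hsq
  have hσ1 : σ = 1 := by
    ext i
    exact congrArg Fin.val (hσfix i)
  have hεnz : ∀ i, i ≠ i0 → ε i = 1 := by
    intro i hi
    have hx : x i ≠ 0 := fun h => hi (huniq i h)
    have h1 := hfix i
    rw [hσfix i] at h1
    exact mul_right_cancel₀ hx (by rw [h1, one_mul])
  refine ⟨hσ1, fun i => ?_⟩
  by_cases hi : i = i0
  · subst hi
    have := Fintype.prod_eq_single i (fun j hj => hεnz j hj)
    rw [hprod] at this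
    exact this.symm
  · exact hεnz i hi
end

section
/- Let n ≥ 1 and let ζ_1, ..., ζ_n ∈ ℂ be such that the squares ζ_1², ..., ζ_n² are pairwise distinct and satisfy (ζ_i²)^n = (−1)^{n−1}·4 for every i. Then e_n(ζ_1, ..., ζ_n)² = 4, and for every integer 0 ≤ k ≤ n, e_k(conj(ζ_1), ..., conj(ζ_n)) = 2^{(2k/n) − 2} · e_n(ζ_1, ..., ζ_n) · e_{n−k}(ζ_1, ..., ζ_n), where conj denotes complex conjugation and 2^{(2k/n) − 2} is the positive real power of 2 with real exponent 2k/n − 2. -/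
open Polynomial in
private lemma aux_prod_sq (n : ℕ) (hn : 1 ≤ n) (ζ : Fin n → ℂ)
    (hdist : ∀ i j, i ≠ j → ζ i ^ 2 ≠ ζ j ^ 2)
    (hroot : ∀ i, (ζ i ^ 2) ^ n = (-1 : ℂ) ^ (n - 1) * 4) :
    ∏ i, ζ i ^ 2 = 4 := by
  classical
  set c : ℂ := (-1 : ℂ) ^ (n - 1) * 4 with hc
  set p : ℂ[X] := X ^ n - C c with hp
  have hmo : p.Monic := monic_X_pow_sub_C c (by omega)
  have hdeg : p.natDegree = n := natDegree_X_pow_sub_C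
  have hinj : Function.Injective (fun i => ζ i ^ 2) := by
    intro i j h
    by_contra hij
    exact hdist i j hij h
  set m : Multiset ℂ := Multiset.map (fun i => ζ i ^ 2) Finset.univ.val with hm
  have hnod : m.Nodup := Finset.univ.nodup.map hinj
  have hle : m ≤ p.roots := by
    rw [Multiset.le_iff_count]
    intro a
    by_cases ha : a ∈ m
    · have h1 : m.count a = 1 := Multiset.count_eq_one_of_mem hnod ha
      rw [h1, Polynomial.count_roots]
      rw [Nat.one_le_iff_ne_zero, ← Nat.pos_iff_ne_zero]
      rw [Polynomial.rootMultiplicity_pos hmo.ne_zero]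
      obtain ⟨i, _, hi⟩ := Multiset.mem_map.mp ha
      simp only [Polynomial.IsRoot, hp, Polynomial.eval_sub, Polynomial.eval_pow,
        Polynomial.eval_X, Polynomial.eval_C, ← hi]
      rw [hroot i, hc, sub_self]
    · rw [Multiset.count_eq_zero_of_notMem ha]; exact Nat.zero_le _
  have hcard : Multiset.card p.roots ≤ Multiset.card m := by
    rw [hm, Multiset.card_map]
    simp only [Finset.card_val, Finset.card_univ, Fintype.card_fin]
    calc Multiset.card p.roots ≤ p.natDegree := p.card_roots'
      _ = n := hdeg
  have hme : m = p.roots := Multiset.eq_of_le_of_card_le hle hcard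
  have hsplit : p.Splits := IsAlgClosed.splits p
  have h0 : p.coeff 0 = (-1) ^ p.natDegree * p.roots.prod :=
    hsplit.coeff_zero_eq_prod_roots_of_monic hmo
  have hcz : p.coeff 0 = -c := by
    simp [hp, Polynomial.coeff_X_pow]
    omega
  have hmp : m.prod = ∏ i, ζ i ^ 2 := by
    rw [hm]; rfl
  rw [hcz, hdeg, ← hme, hmp] at h0
  have hodd : (-1 : ℂ) ^ n * (-1 : ℂ) ^ (n - 1) = -1 := by
    rw [← pow_add]
    exact Odd.neg_one_pow ⟨n - 1, by omega⟩
  have := h0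
  rw [hc] at this
  have h4 : ∏ i, ζ i ^ 2 = (-1:ℂ)^n * (-((-1:ℂ)^(n-1) * 4)) := by
    have hsq : ((-1:ℂ)^n) * ((-1:ℂ)^n) = 1 := by
      rw [← pow_add]; exact Even.neg_one_pow ⟨n, by ring⟩
    calc ∏ i, ζ i ^ 2 = ((-1:ℂ)^n * (-1:ℂ)^n) * ∏ i, ζ i ^ 2 := by rw [hsq, one_mul]
      _ = (-1:ℂ)^n * ((-1:ℂ)^n * ∏ i, ζ i ^ 2) := by ring
      _ = (-1:ℂ)^n * (-((-1:ℂ)^(n-1) * 4)) := by rw [← this]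
  rw [h4]
  calc (-1:ℂ)^n * (-((-1:ℂ)^(n-1) * 4)) = -((-1:ℂ)^n * (-1:ℂ)^(n-1)) * 4 := by ring
    _ = 4 := by rw [hodd]; ring

private lemma aux_conj (n : ℕ) (hn : 1 ≤ n) (ζ : Fin n → ℂ)
    (hroot : ∀ i, (ζ i ^ 2) ^ n = (-1 : ℂ) ^ (n - 1) * 4) :
    (∀ i, ζ i ≠ 0) ∧
    (∀ i, (starRingEnd ℂ) (ζ i) = (((2:ℝ) ^ ((2:ℝ)/(n:ℝ)) : ℝ) : ℂ) * (ζ i)⁻¹) := by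
  classical
  have hn0 : (n : ℝ) ≠ 0 := Nat.cast_ne_zero.mpr (by omega)
  set r : ℝ := (2:ℝ) ^ ((2:ℝ)/(n:ℝ)) with hrdef
  have hr4 : r ^ n = 4 := by
    rw [hrdef, ← Real.rpow_natCast ((2:ℝ) ^ ((2:ℝ)/(n:ℝ))) n, ← Real.rpow_mul (by norm_num)]
    rw [show (2:ℝ)/(n:ℝ) * (n:ℕ) = 2 by field_simp]
    rw [show (2:ℝ) = ((2:ℕ):ℝ) by norm_num, Real.rpow_natCast]
    norm_num
  have hnz : ∀ i, ζ i ≠ 0 := by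
    intro i h
    have := hroot i
    rw [h] at this
    rw [zero_pow two_ne_zero, zero_pow (by omega : n ≠ 0)] at this
    have h2 := congrArg (fun z : ℂ => ‖z‖) this
    simp [norm_mul, norm_pow] at h2
  refine ⟨hnz, ?_⟩
  intro i
  have habs : ‖ζ i ^ 2‖ ^ n = 4 := by
    have := congrArg (fun z : ℂ => ‖z‖) (hroot i)
    simp only [norm_pow, norm_mul] at this
    simpa using this
  have hpos : (0:ℝ) ≤ ‖ζ i ^ 2‖ := norm_nonneg _
  have heq : ‖ζ i ^ 2‖ = r := by
    have h1 : (‖ζ i ^ 2‖ ^ n) ^ ((n:ℝ)⁻¹) = ‖ζ i ^ 2‖ :=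
      Real.pow_rpow_inv_natCast hpos (by omega)
    have h2 : (r ^ n) ^ ((n:ℝ)⁻¹) = r :=
      Real.pow_rpow_inv_natCast (Real.rpow_nonneg (by norm_num) _) (by omega)
    rw [← h1, ← h2, habs, hr4]
  have hns : Complex.normSq (ζ i) = r := by
    rw [← Complex.sq_norm, ← norm_pow]; exact heq
  have hc : (starRingEnd ℂ) (ζ i) * ζ i = (r : ℂ) := by
    rw [mul_comm, Complex.mul_conj, hns]
  rw [← div_eq_mul_inv]
  exact (eq_div_iff (hnz i)).mpr hc

private lemma aux_key (n : ℕ) (ζ : Fin n → ℂ) (k : ℕ) (hk : k ≤ n)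
    (r : ℝ) (hr : ∀ i, (starRingEnd ℂ) (ζ i) = (r : ℂ) * (ζ i)⁻¹)
    (hnz : ∀ i, ζ i ≠ 0) :
    esymmVal n k (fun i => starRingEnd ℂ (ζ i)) * (∏ i, ζ i) =
      ((r : ℂ)) ^ k * esymmVal n (n - k) ζ := by
  classical
  unfold esymmVal
  rw [Finset.sum_mul, Finset.mul_sum]
  refine Finset.sum_nbij' (fun t => tᶜ) (fun s => sᶜ) ?_ ?_ ?_ ?_ ?_
  · intro t ht
    rw [Finset.mem_powersetCard_univ] at ht ⊢
    rw [Finset.card_compl, ht, Fintype.card_fin]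
  · intro s hs
    rw [Finset.mem_powersetCard_univ] at hs ⊢
    rw [Finset.card_compl, hs, Fintype.card_fin]
    omega
  · intro t _; exact compl_compl t
  · intro s _; exact compl_compl s
  · intro t ht
    rw [Finset.mem_powersetCard_univ] at ht
    have h1 : ∏ i ∈ t, (starRingEnd ℂ) (ζ i) = (r : ℂ) ^ k * (∏ i ∈ t, ζ i)⁻¹ := by
      calc ∏ i ∈ t, (starRingEnd ℂ) (ζ i) = ∏ i ∈ t, ((r : ℂ) * (ζ i)⁻¹) :=
            Finset.prod_congr rfl fun i _ => hr i
        _ = (∏ _i ∈ t, (r : ℂ)) * ∏ i ∈ t, (ζ i)⁻¹ := Finset.prod_mul_distrib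
        _ = (r : ℂ) ^ k * (∏ i ∈ t, ζ i)⁻¹ := by
            rw [Finset.prod_const, ht, ← Finset.prod_inv_distrib]
    have h2 : (∏ i ∈ t, ζ i) * ∏ i ∈ tᶜ, ζ i = ∏ i, ζ i :=
      Finset.prod_mul_prod_compl t ζ
    have h3 : (∏ i ∈ t, ζ i) ≠ 0 := Finset.prod_ne_zero_iff.mpr fun i _ => hnz i
    rw [h1, ← h2]
    field_simp

/-- if the squares `ζ_1², …, ζ_n²` are pairwise distinct `n`-th roots of
`(-1)^{n-1}·4`, then `e_n(ζ)² = 4` and for `0 ≤ k ≤ n`,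
`e_k(conj ζ) = 2^{2k/n − 2} · e_n(ζ) · e_{n−k}(ζ)`. -/
theorem conj_esymm_orthogonal (n : ℕ) (hn : 1 ≤ n) (ζ : Fin n → ℂ)
    (hdist : ∀ i j, i ≠ j → ζ i ^ 2 ≠ ζ j ^ 2)
    (hroot : ∀ i, (ζ i ^ 2) ^ n = (-1 : ℂ) ^ (n - 1) * 4) :
    esymmVal n n ζ ^ 2 = 4 ∧
      ∀ k : ℕ, k ≤ n →
        esymmVal n k (fun i => starRingEnd ℂ (ζ i)) =
          (((2 : ℝ) ^ (2 * (k : ℝ) / (n : ℝ) - 2) : ℝ) : ℂ) *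
            esymmVal n n ζ * esymmVal n (n - k) ζ := by
  classical
  have hn0 : (n : ℝ) ≠ 0 := Nat.cast_ne_zero.mpr (by omega)
  obtain ⟨hnz, hconj⟩ := aux_conj n hn ζ hroot
  have hprod := aux_prod_sq n hn ζ hdist hroot
  set r : ℝ := (2:ℝ) ^ ((2:ℝ)/(n:ℝ)) with hrdef
  have hEn : esymmVal n n ζ = ∏ i, ζ i := by
    have hps : Finset.powersetCard n (Finset.univ : Finset (Fin n)) = {Finset.univ} := by
      have h := Finset.powersetCard_self (Finset.univ : Finset (Fin n))
      rwa [Finset.card_univ, Fintype.card_fin] at h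
    unfold esymmVal
    rw [hps, Finset.sum_singleton]
  have hEn2 : esymmVal n n ζ ^ 2 = 4 := by
    rw [hEn, ← Finset.prod_pow]; exact hprod
  refine ⟨hEn2, ?_⟩
  intro k hk
  have key : esymmVal n k (fun i => starRingEnd ℂ (ζ i)) * esymmVal n n ζ =
      ((r : ℂ)) ^ k * esymmVal n (n - k) ζ := by
    rw [hEn]
    exact aux_key n ζ k hk r hconj hnz
  have hcoef : (2:ℝ) ^ (2 * (k:ℝ) / (n:ℝ) - 2) = r ^ k / 4 := by
    have hrk : r ^ k = (2:ℝ) ^ (2 * (k:ℝ) / (n:ℝ)) := by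
      rw [hrdef, ← Real.rpow_natCast ((2:ℝ) ^ ((2:ℝ)/(n:ℝ))) k, ← Real.rpow_mul (by norm_num)]
      ring_nf
    rw [hrk, Real.rpow_sub (by norm_num : (0:ℝ) < 2)]
    rw [show (2:ℝ) = ((2:ℕ):ℝ) from by norm_num]
    rw [Real.rpow_natCast]
    norm_num
  have hc4 : (((2 : ℝ) ^ (2 * (k : ℝ) / (n : ℝ) - 2) : ℝ) : ℂ) = ((r:ℂ)) ^ k / 4 := by
    rw [hcoef]
    push_cast
    ring
  rw [hc4]
  have h4 : esymmVal n n ζ * esymmVal n n ζ = 4 := by rw [← sq]; exact hEn2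
  calc esymmVal n k (fun i => starRingEnd ℂ (ζ i))
      = esymmVal n k (fun i => starRingEnd ℂ (ζ i)) *
          (esymmVal n n ζ * esymmVal n n ζ) / 4 := by rw [h4]; ring
    _ = esymmVal n k (fun i => starRingEnd ℂ (ζ i)) * esymmVal n n ζ *
          esymmVal n n ζ / 4 := by ring
    _ = ((r : ℂ)) ^ k * esymmVal n (n - k) ζ * esymmVal n n ζ / 4 := by rw [key]
    _ = (r:ℂ) ^ k / 4 * esymmVal n n ζ * esymmVal n (n - k) ζ := by ring
end

section
/- Let n ≥ 1 and let R = {z ∈ ℂ : z^{n+1} = (−1)^n} be the set of (n+1)-th roots of (−1)^n (a set of n+1 elements). Then the set of functions f : R → ℂ such that f(r)² = r for every r ∈ R and ∏_{r ∈ R} f(r) = 1 has exactly 2^n elements. -/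
open Polynomial


/-- let `R` be the set of `(n+1)`-th roots of `(-1)^n` (a set with `n+1`
elements). The set of functions `f : R → ℂ` with `f(r)² = r` for all `r ∈ R` and
`∏_{r ∈ R} f(r) = 1` has exactly `2^n` elements. -/
theorem lagrangian_spectrum_card (n : ℕ) (hn : 1 ≤ n) :
    Set.ncard {z : ℂ | z ^ (n + 1) = (-1 : ℂ) ^ n} = n + 1 ∧
    Set.ncard {f : {z : ℂ // z ^ (n + 1) = (-1 : ℂ) ^ n} → ℂ |
        (∀ r, f r ^ 2 = (r : ℂ)) ∧ (∏ᶠ r, f r) = 1} = 2 ^ n := by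
  classical
  set a : ℂ := (-1 : ℂ) ^ n with ha_def
  have ha : a ≠ 0 := pow_ne_zero _ (by norm_num)
  have hζ := Complex.isPrimitiveRoot_exp (n+1) (Nat.succ_ne_zero n)
  have hex : ∃ α : ℂ, α ^ (n+1) = a := IsAlgClosed.exists_pow_nat_eq a n.succ_pos
  have hcard : Multiset.card (nthRoots (n+1) a) = n + 1 := by
    rw [hζ.card_nthRoots, if_pos hex]
  have hnodup : (nthRoots (n+1) a).Nodup := hζ.nthRoots_nodup ha
  have hmo : (X ^ (n+1) - C a).Monic := monic_X_pow_sub_C a (Nat.succ_ne_zero n)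
  have hsp : (X ^ (n+1) - C a).Splits := IsAlgClosed.splits _
  have h0 := hsp.coeff_zero_eq_prod_roots_of_monic hmo
  have hdeg : (X ^ (n+1) - C a).natDegree = n + 1 := natDegree_X_pow_sub_C
  have hc0 : (X ^ (n+1) - C a).coeff 0 = -a := by
    simp [coeff_X_pow]
  have hprod : (nthRoots (n+1) a).prod = 1 := by
    set p := (nthRoots (n+1) a).prod with hp
    have h1 : -a = (-1:ℂ)^(n+1) * p := by
      rw [← hc0]; rw [hdeg] at h0; exact h0
    rcases Nat.even_or_odd n with h | h
    · rw [ha_def, h.neg_one_pow, (Even.add_one h).neg_one_pow] at h1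
      linear_combination h1
    · rw [ha_def, h.neg_one_pow, (Odd.add_one h).neg_one_pow] at h1
      linear_combination -h1
  -- Finset of roots
  set F : Finset ℂ := (nthRoots (n+1) a).toFinset with hF
  have hmem : ∀ z : ℂ, z ∈ F ↔ z ^ (n+1) = a := by
    intro z; rw [hF, Multiset.mem_toFinset, mem_nthRoots n.succ_pos]
  have hFcard : F.card = n + 1 := by
    rw [hF, Multiset.toFinset_card_of_nodup hnodup, hcard]
  have hFprod : ∏ x ∈ F, x = 1 := by
    rw [hF, ← hprod, Finset.prod_eq_multiset_prod]
    rw [Multiset.toFinset_val, Multiset.dedup_eq_self.mpr hnodup, Multiset.map_id']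
  constructor
  · have hSF : {z : ℂ | z ^ (n + 1) = (-1 : ℂ) ^ n} = ↑F := by
      ext z; simp [hmem z, ha_def]
    rw [hSF, Set.ncard_coe_finset, hFcard]
  -- Part 2
  · set R := {z : ℂ // z ^ (n + 1) = (-1 : ℂ) ^ n} with hR
    letI : Fintype R := Fintype.ofFinset F hmem
    have hcardR : Fintype.card R = n + 1 := by
      rw [← hFcard]; exact Fintype.card_ofFinset F hmem
    have hprodR : ∏ r : R, (r : ℂ) = 1 := by
      exact (Finset.prod_subtype F hmem (fun z => z)).symm.trans hFprod
    have hr_ne : ∀ r : R, (r : ℂ) ≠ 0 := by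
      intro r hr0
      have := r.2
      rw [hr0, zero_pow (Nat.succ_ne_zero n)] at this
      exact ha this.symm
    -- square roots
    have hgex : ∀ r : R, ∃ z : ℂ, z ^ 2 = (r : ℂ) :=
      fun r => IsAlgClosed.exists_pow_nat_eq _ two_pos
    set g : R → ℂ := fun r => (hgex r).choose with hg
    have hg2 : ∀ r : R, g r ^ 2 = (r : ℂ) := fun r => (hgex r).choose_spec
    have hgne : ∀ r : R, g r ≠ 0 := by
      intro r h
      apply hr_ne r; rw [← hg2 r, h]; ring
    -- base point
    have hne : Nonempty R := by
      rw [← Fintype.card_pos_iff, hcardR]; omega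
    obtain ⟨r0⟩ := hne
    set K := {r : R // r ≠ r0} with hK
    have hsplit : ∀ f : R → ℂ, ∏ r : R, f r = f r0 * ∏ s : K, f s.1 := by
      intro f
      rw [← Finset.prod_subtype (Finset.univ.erase r0) (by simp) f]
      exact (Finset.mul_prod_erase Finset.univ f (Finset.mem_univ r0)).symm
    have hKprod : (r0 : ℂ) * ∏ s : K, (s.1 : ℂ) = 1 := by
      rw [← hsplit (fun r : R => (r : ℂ))]; exact hprodR
    -- sign function
    set sgn : Bool → ℂ := fun b => if b then 1 else -1 with hsgn
    have hsgn2 : ∀ b, sgn b ^ 2 = 1 := by intro b; cases b <;> simp [hsgn]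
    have hsq : ∀ x y : ℂ, x ^ 2 = y ^ 2 → x = y ∨ x = -y := by
      intro x y h
      have : (x - y) * (x + y) = 0 := by linear_combination h
      rcases mul_eq_zero.mp this with h' | h'
      · exact Or.inl (sub_eq_zero.mp h')
      · exact Or.inr (eq_neg_of_add_eq_zero_left h')
    -- the map
    set T := {f : R → ℂ | (∀ r, f r ^ 2 = (r : ℂ)) ∧ (∏ᶠ r, f r) = 1} with hT
    set Φ : (K → Bool) → (R → ℂ) := fun b r =>
      if h : r = r0 then (∏ s : K, (sgn (b s) * g s.1))⁻¹ else sgn (b ⟨r, h⟩) * g r with hΦ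
    have hΦsq : ∀ b : K → Bool, (∏ s : K, (sgn (b s) * g s.1)) ^ 2 = ∏ s : K, (s.1 : ℂ) := by
      intro b
      rw [← Finset.prod_pow]
      exact Finset.prod_congr rfl fun s _ => by rw [mul_pow, hsgn2, one_mul, hg2]
    have hΦne : ∀ b : K → Bool, (∏ s : K, (sgn (b s) * g s.1)) ≠ 0 := by
      intro b h
      have := hΦsq b
      rw [h] at this
      have h1 : (r0 : ℂ) * (0:ℂ)^2 = 1 := by rw [this]; exact hKprod
      simp at h1
    have hΦmem : ∀ b : K → Bool, Φ b ∈ T := by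
      intro b
      constructor
      · intro r
        by_cases h : r = r0
        · subst h
          rw [hΦ]; simp only [dif_pos]
          rw [inv_pow, hΦsq b]
          exact inv_eq_of_mul_eq_one_left hKprod
        · rw [hΦ]; simp only [dif_neg h]
          rw [mul_pow, hsgn2, one_mul, hg2]
      · rw [finprod_eq_prod_of_fintype, hsplit (Φ b)]
        have h1 : ∀ s : K, Φ b s.1 = sgn (b s) * g s.1 := by
          intro s; rw [hΦ]; simp only [dif_neg s.2]; rfl
        rw [Finset.prod_congr rfl (fun s _ => h1 s)]
        rw [hΦ]; simp only [dif_pos]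
        exact inv_mul_cancel₀ (hΦne b)
    have hbij : Function.Bijective (fun b : K → Bool => (⟨Φ b, hΦmem b⟩ : T)) := by
      constructor
      · intro b b' hbb'
        have heq : Φ b = Φ b' := congrArg Subtype.val hbb'
        funext s
        have := congrFun heq s.1
        rw [hΦ] at this
        simp only [dif_neg s.2] at this
        have hs := mul_right_cancel₀ (hgne s.1) this
        cases hb : b s <;> cases hb' : b' s <;> rw [hb, hb'] at hs <;> simp [hsgn] at hs <;>
          first | rfl | norm_num at hs
      · rintro ⟨f, hf1, hf2⟩
        have hfgs : ∀ r : R, f r = g r ∨ f r = -(g r) := by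
          intro r
          apply hsq
          rw [hf1 r, hg2 r]
        refine ⟨fun s => decide (f s.1 = g s.1), ?_⟩
        have hfs : ∀ s : K, sgn (decide (f s.1 = g s.1)) * g s.1 = f s.1 := by
          intro s
          rcases hfgs s.1 with h | h
          · rw [h]; simp [hsgn]
          · have hd : decide (f s.1 = g s.1) = false := by
              rw [decide_eq_false_iff_not]
              intro h'
              rw [h] at h'
              exact hgne s.1 (by linear_combination -h' / 2)
            rw [hd, h]; simp [hsgn]
        apply Subtype.ext
        funext r
        simp only
        by_cases h : r = r0
        · subst h
          rw [hΦ]; simp only [dif_pos]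
          rw [Finset.prod_congr rfl (fun s _ => hfs s)]
          have := hf2
          rw [finprod_eq_prod_of_fintype, hsplit f] at this
          exact inv_eq_of_mul_eq_one_left this
        · rw [hΦ]; simp only [dif_neg h]
          exact hfs ⟨r, h⟩
    have hTcard : Nat.card T = 2 ^ n := by
      rw [← Nat.card_congr (Equiv.ofBijective _ hbij), Nat.card_eq_fintype_card,
        Fintype.card_fun, Fintype.card_bool]
      congr 1
      have h1 : Fintype.card K = Fintype.card R - Fintype.card {r : R // r = r0} :=
        Fintype.card_subtype_compl _
      rw [h1, Fintype.card_subtype_eq, hcardR]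
      omega
    rw [← hTcard]
    exact (Nat.card_coe_set_eq T).symm
end

section
/- For every z ∈ ℂ with z^{25} − 270·z^{13} − 27·z = 0, one has 234 · 12^{1/4} · z · conj(z) = z^{12} · (11·z^{12} − 2967), where conj denotes complex conjugation and 12^{1/4} is the positive real fourth root of 12. -/
lemma aux_key_pos (r : ℝ) (hr : 0 ≤ r) (h : r ^ 2 = 3 + 2 * Real.sqrt 3) :
    (12 : ℝ) ^ ((1 : ℝ) / 4) * r = 3 + Real.sqrt 3 := by
  set s := Real.sqrt 3 with hsdef
  have hs : s ^ 2 = 3 := Real.sq_sqrt (by norm_num)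
  have hs0 : 0 ≤ s := Real.sqrt_nonneg 3
  have h4 : ((12 : ℝ) ^ ((1 : ℝ) / 4)) ^ 2 = 2 * s := by
    rw [← Real.rpow_natCast ((12:ℝ) ^ ((1:ℝ)/4)) 2, ← Real.rpow_mul (by norm_num)]
    norm_num
    rw [show (12:ℝ) = (2*s)^2 by nlinarith, ← Real.sqrt_eq_rpow,
      Real.sqrt_sq (by positivity)]
  have h0 : (0:ℝ) ≤ (12 : ℝ) ^ ((1 : ℝ) / 4) := Real.rpow_nonneg (by norm_num) _
  refine (pow_left_inj₀ (by positivity) (by positivity) (two_ne_zero)).mp ?_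
  rw [mul_pow, h4, h]
  nlinarith

lemma aux_key_neg (r : ℝ) (hr : 0 ≤ r) (h : r ^ 2 = 2 * Real.sqrt 3 - 3) :
    (12 : ℝ) ^ ((1 : ℝ) / 4) * r = 3 - Real.sqrt 3 := by
  set s := Real.sqrt 3 with hsdef
  have hs : s ^ 2 = 3 := Real.sq_sqrt (by norm_num)
  have hs0 : 0 ≤ s := Real.sqrt_nonneg 3
  have hs2 : s ≤ 2 := by nlinarith
  have h4 : ((12 : ℝ) ^ ((1 : ℝ) / 4)) ^ 2 = 2 * s := by
    rw [← Real.rpow_natCast ((12:ℝ) ^ ((1:ℝ)/4)) 2, ← Real.rpow_mul (by norm_num)]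
    norm_num
    rw [show (12:ℝ) = (2*s)^2 by nlinarith, ← Real.sqrt_eq_rpow,
      Real.sqrt_sq (by positivity)]
  have h0 : (0:ℝ) ≤ (12 : ℝ) ^ ((1 : ℝ) / 4) := Real.rpow_nonneg (by norm_num) _
  refine (pow_left_inj₀ (by positivity) (by nlinarith) (two_ne_zero)).mp ?_
  rw [mul_pow, h4, h]
  nlinarith

/-- for every root `z` of `P(z) = z^25 − 270 z^13 − 27 z`, one has
`234 · 12^{1/4} · z · conj(z) = z^12 · (11 z^12 − 2967)`. -/
theorem cayley_plane_conjugation (z : ℂ)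
    (hz : z ^ 25 - 270 * z ^ 13 - 27 * z = 0) :
    234 * (((12 : ℝ) ^ ((1 : ℝ) / 4) : ℝ) : ℂ) * z * starRingEnd ℂ z =
      z ^ 12 * (11 * z ^ 12 - 2967) := by
  rcases eq_or_ne z 0 with rfl | hz0
  · simp
  -- z ≠ 0
  set s := Real.sqrt 3 with hsdef
  have hs : s ^ 2 = 3 := Real.sq_sqrt (by norm_num)
  have hs0 : 0 ≤ s := Real.sqrt_nonneg 3
  have hsC : ((s : ℂ)) ^ 2 = 3 := by
    rw [← Complex.ofReal_pow, hs]; norm_num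
  have h24 : z ^ 24 - 270 * z ^ 12 - 27 = 0 := by
    have : z * (z ^ 24 - 270 * z ^ 12 - 27) = 0 := by linear_combination hz
    rcases mul_eq_zero.mp this with h | h
    · exact absurd h hz0
    · exact h
  have hfac : (z ^ 12 - (135 + 78 * (s : ℂ))) * (z ^ 12 - (135 - 78 * (s : ℂ))) = 0 := by
    linear_combination h24 - 6084 * hsC
  have hu0 : (0:ℝ) ≤ Complex.normSq z := Complex.normSq_nonneg z
  have hzc : z * starRingEnd ℂ z = (Complex.normSq z : ℂ) := Complex.mul_conj z
  rcases mul_eq_zero.mp hfac with h | h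
  · -- z^12 = 135 + 78 s
    have hw : z ^ 12 = ((135 + 78 * s : ℝ) : ℂ) := by
      push_cast; linear_combination h
    have h12 : (Complex.normSq z) ^ 12 = (135 + 78 * s) ^ 2 := by
      have := congrArg Complex.normSq hw
      rwa [map_pow, Complex.normSq_ofReal, ← sq] at this
    have h6 : ((Complex.normSq z) ^ 2) ^ 6 = (3 + 2 * s) ^ 6 := by
      have hcube : (3 + 2*s)^3 = 135 + 78*s := by linear_combination (8*s+36)*hs
      rw [← pow_mul, h12, show (3 + 2*s)^6 = ((3 + 2*s)^3)^2 by ring, hcube]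
    have h2 : (Complex.normSq z) ^ 2 = 3 + 2 * s :=
      (pow_left_inj₀ (by positivity) (by positivity) (by norm_num)).mp h6
    have hk := aux_key_pos (Complex.normSq z) hu0 h2
    calc 234 * (((12 : ℝ) ^ ((1 : ℝ) / 4) : ℝ) : ℂ) * z * starRingEnd ℂ z
        = 234 * (((12 : ℝ) ^ ((1 : ℝ) / 4) * Complex.normSq z : ℝ) : ℂ) := by
          push_cast; rw [mul_assoc, hzc]; ring
      _ = 234 * ((3 + s : ℝ) : ℂ) := by rw [hk]
      _ = z ^ 12 * (11 * z ^ 12 - 2967) := by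
          rw [hw]; push_cast; linear_combination (-66924 : ℂ) * hsC
  · -- z^12 = 135 - 78 s
    have hw : z ^ 12 = ((135 - 78 * s : ℝ) : ℂ) := by
      push_cast; linear_combination h
    have h12 : (Complex.normSq z) ^ 12 = (135 - 78 * s) ^ 2 := by
      have := congrArg Complex.normSq hw
      rwa [map_pow, Complex.normSq_ofReal, ← sq] at this
    have h6 : ((Complex.normSq z) ^ 2) ^ 6 = (2 * s - 3) ^ 6 := by
      have hcube : (2*s - 3)^3 = 78*s - 135 := by linear_combination (8*s-36)*hs
      rw [← pow_mul, h12, show (2*s - 3)^6 = ((2*s - 3)^3)^2 by ring, hcube,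
        show (78*s - 135)^2 = (135 - 78*s)^2 by ring]
    have hs32 : (3:ℝ) ≤ 2 * s := by nlinarith
    have h2 : (Complex.normSq z) ^ 2 = 2 * s - 3 :=
      (pow_left_inj₀ (by positivity) (by linarith) (by norm_num)).mp h6
    have hk := aux_key_neg (Complex.normSq z) hu0 h2
    calc 234 * (((12 : ℝ) ^ ((1 : ℝ) / 4) : ℝ) : ℂ) * z * starRingEnd ℂ z
        = 234 * (((12 : ℝ) ^ ((1 : ℝ) / 4) * Complex.normSq z : ℝ) : ℂ) := by
          push_cast; rw [mul_assoc, hzc]; ring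
      _ = 234 * ((3 - s : ℝ) : ℂ) := by rw [hk]
      _ = z ^ 12 * (11 * z ^ 12 - 2967) := by
          rw [hw]; push_cast; linear_combination (-66924 : ℂ) * hsC
end

section
/- In the polynomial ring ℚ[T], let P(T) = 64 − 401808·T + 29496·T² − T³ and Q(T) = 4237743313/721278 − (33629825/77976)·T + (84371/5770224)·T². Then P divides (T·Q(T))^{18} − 3456²·T², i.e. (T·Q(T))^{18} ≡ (3456·T)² modulo P. -/
open Polynomial

private lemma dvdMulSubMulAux {R : Type*} [CommRing R] {P a b c d : R}
    (h1 : P ∣ a - b) (h2 : P ∣ c - d) : P ∣ a * c - b * d := by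
  have : a * c - b * d = (a - b) * c + b * (c - d) := by ring
  rw [this]
  exact dvd_add (h1.mul_right c) (h2.mul_left b)

/-- with `P(T) = 64 − 401808 T + 29496 T² − T³` and
`Q(T) = 4237743313/721278 − (33629825/77976) T + (84371/5770224) T²` in `ℚ[T]`,
one has `(T·Q(T))^18 ≡ (3456 T)² mod P`. -/
theorem freudenthal_key_fact
    (P Q : Polynomial ℚ)
    (hP : P = C 64 - C 401808 * X + C 29496 * X ^ 2 - X ^ 3)
    (hQ : Q = C (4237743313 / 721278) - C (33629825 / 77976) * X +
      C (84371 / 5770224) * X ^ 2) :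
    P ∣ (X * Q) ^ 18 - (C 3456 * X) ^ 2 := by
  set B1 : Polynomial ℚ := C (337484 / 360639 : ℚ) + C (3391 / 19494 : ℚ) * X + C (-17 / 2885112 : ℚ) * X ^ 2 with hB1
  set s1 : Polynomial ℚ := C (-84371 / 5770224 : ℚ) with hs1
  set B2 : Polynomial ℚ := C (11696 / 13357 : ℚ) + C (799 / 1083 : ℚ) * X + C (-1 / 40071 : ℚ) * X ^ 2 with hB2
  set s2 : Polynomial ℚ := C (266849 / 260120976642 : ℚ) + C (-289 / 8323871252544 : ℚ) * X with hs2
  set B4 : Polynomial ℚ := C (92032 / 120213 : ℚ) + C (28288 / 3249 : ℚ) * X + C (-35 / 120213 : ℚ) * X ^ 2 with hB4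
  set s4 : Polynomial ℚ := C (29630 / 1605685041 : ℚ) + C (-1 / 1605685041 : ℚ) * X with hs4
  set B8 : Polynomial ℚ := C (5632 / 13357 : ℚ) + C (377536 / 361 : ℚ) * X + C (-272 / 13357 : ℚ) * X ^ 2 with hB8
  set s8 : Polynomial ℚ := C (37133320 / 14451165369 : ℚ) + C (-1225 / 14451165369 : ℚ) * X with hs8
  set B16 : Polynomial ℚ := C (-25952256 / 13357 : ℚ) + C (4404363264 / 361 : ℚ) * X + C (2644623360 / 13357 : ℚ) * X ^ 2 with hB16
  set s16 : Polynomial ℚ := C (5416812544 / 178409449 : ℚ) + C (-73984 / 178409449 : ℚ) * X with hs16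
  set B18 : Polynomial ℚ := C (0 : ℚ) + C (0 : ℚ) * X + C (11943936 : ℚ) * X ^ 2 with hB18
  set s18 : Polynomial ℚ := C (-4742774784 / 178409449 : ℚ) + C (881541120 / 178409449 : ℚ) * X with hs18

  have key : ∀ f g h : Polynomial ℚ, f - g = P * h → P ∣ f - g := by
    intro f g h he; exact he ▸ Dvd.intro h rfl
  have eq1 : X * Q - B1 = P * s1 := by
    apply Polynomial.funext; intro x
    simp only [hP, hQ, hB1, hs1, eval_mul, eval_add, eval_sub, eval_pow, eval_C, eval_X]
    ring
  have eq2 : B1 * B1 - B2 = P * s2 := by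
    apply Polynomial.funext; intro x
    simp only [hP, hB1, hB2, hs2, eval_mul, eval_add, eval_sub, eval_pow, eval_C, eval_X]
    ring
  have eq4 : B2 * B2 - B4 = P * s4 := by
    apply Polynomial.funext; intro x
    simp only [hP, hB2, hB4, hs4, eval_mul, eval_add, eval_sub, eval_pow, eval_C, eval_X]
    ring
  have eq8 : B4 * B4 - B8 = P * s8 := by
    apply Polynomial.funext; intro x
    simp only [hP, hB4, hB8, hs8, eval_mul, eval_add, eval_sub, eval_pow, eval_C, eval_X]
    ring
  have eq16 : B8 * B8 - B16 = P * s16 := by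
    apply Polynomial.funext; intro x
    simp only [hP, hB8, hB16, hs16, eval_mul, eval_add, eval_sub, eval_pow, eval_C, eval_X]
    ring
  have eq18 : B16 * B2 - B18 = P * s18 := by
    apply Polynomial.funext; intro x
    simp only [hP, hB16, hB2, hB18, hs18, eval_mul, eval_add, eval_sub, eval_pow, eval_C, eval_X]
    ring
  have d1 : P ∣ X * Q - B1 := key _ _ _ eq1
  have d2 : P ∣ (X * Q) ^ 2 - B2 := by
    have := (dvdMulSubMulAux d1 d1).add (key _ _ _ eq2)
    simpa [sub_add_sub_cancel, sq] using this
  have d4 : P ∣ (X * Q) ^ 4 - B4 := by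
    have := (dvdMulSubMulAux d2 d2).add (key _ _ _ eq4)
    have h : (X * Q) ^ 2 * ((X * Q) ^ 2) = (X * Q) ^ 4 := by ring
    simpa [sub_add_sub_cancel, h] using this
  have d8 : P ∣ (X * Q) ^ 8 - B8 := by
    have := (dvdMulSubMulAux d4 d4).add (key _ _ _ eq8)
    have h : (X * Q) ^ 4 * ((X * Q) ^ 4) = (X * Q) ^ 8 := by ring
    simpa [sub_add_sub_cancel, h] using this
  have d16 : P ∣ (X * Q) ^ 16 - B16 := by
    have := (dvdMulSubMulAux d8 d8).add (key _ _ _ eq16)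
    have h : (X * Q) ^ 8 * ((X * Q) ^ 8) = (X * Q) ^ 16 := by ring
    simpa [sub_add_sub_cancel, h] using this
  have d18 : P ∣ (X * Q) ^ 18 - B18 := by
    have := (dvdMulSubMulAux d16 d2).add (key _ _ _ eq18)
    have h : (X * Q) ^ 16 * ((X * Q) ^ 2) = (X * Q) ^ 18 := by ring
    simpa [sub_add_sub_cancel, h] using this
  have hfin : B18 = (C 3456 * X) ^ 2 := by
    apply Polynomial.funext; intro x
    simp only [hB18, eval_mul, eval_add, eval_pow, eval_C, eval_X]
    ring
  rwa [hfin] at d18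
end

section
/- The cubic polynomial T³ − 29496·T² + 401808·T − 64 has three pairwise distinct complex roots, all of which are real and positive. -/
/-- the cubic `T³ − 29496 T² + 401808 T − 64` has three pairwise
distinct complex roots, all real and positive. -/
theorem freudenthal_cubic_roots :
    ∃ a b c : ℝ, 0 < a ∧ 0 < b ∧ 0 < c ∧ a ≠ b ∧ a ≠ c ∧ b ≠ c ∧
      ∀ z : ℂ, z ^ 3 - 29496 * z ^ 2 + 401808 * z - 64 = 0 ↔
        z = (a : ℂ) ∨ z = (b : ℂ) ∨ z = (c : ℂ) := by
  set f : ℝ → ℝ := fun x => x ^ 3 - 29496 * x ^ 2 + 401808 * x - 64 with hf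
  have hcont : Continuous f := by fun_prop
  -- root a in (0,1)
  obtain ⟨a, haI, ha0⟩ : ∃ x ∈ Set.Icc (0:ℝ) 1, f x = 0 := by
    have hsub := intermediate_value_Icc (by norm_num : (0:ℝ) ≤ 1) hcont.continuousOn
    have hm : (0:ℝ) ∈ Set.Icc (f 0) (f 1) := by
      simp only [hf]; norm_num
    obtain ⟨x, hx, hx0⟩ := hsub hm
    exact ⟨x, hx, hx0⟩
  -- root b in (1,20)
  obtain ⟨b, hbI, hb0⟩ : ∃ x ∈ Set.Icc (1:ℝ) 20, f x = 0 := by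
    have hsub := intermediate_value_Icc' (by norm_num : (1:ℝ) ≤ 20) hcont.continuousOn
    have hm : (0:ℝ) ∈ Set.Icc (f 20) (f 1) := by
      simp only [hf]; norm_num
    obtain ⟨x, hx, hx0⟩ := hsub hm
    exact ⟨x, hx, hx0⟩
  -- root c in (20,30000)
  obtain ⟨c, hcI, hc0⟩ : ∃ x ∈ Set.Icc (20:ℝ) 30000, f x = 0 := by
    have hsub := intermediate_value_Icc (by norm_num : (20:ℝ) ≤ 30000) hcont.continuousOn
    have hm : (0:ℝ) ∈ Set.Icc (f 20) (f 30000) := by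
      simp only [hf]; norm_num
    obtain ⟨x, hx, hx0⟩ := hsub hm
    exact ⟨x, hx, hx0⟩
  have hfa : a ^ 3 - 29496 * a ^ 2 + 401808 * a - 64 = 0 := ha0
  have hfb : b ^ 3 - 29496 * b ^ 2 + 401808 * b - 64 = 0 := hb0
  have hfc : c ^ 3 - 29496 * c ^ 2 + 401808 * c - 64 = 0 := hc0
  have ha_ne0 : a ≠ 0 := by
    rintro rfl; simp only [hf] at ha0; norm_num at ha0
  have ha_ne1 : a ≠ 1 := by
    rintro rfl; simp only [hf] at ha0; norm_num at ha0
  have hb_ne1 : b ≠ 1 := by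
    rintro rfl; simp only [hf] at hb0; norm_num at hb0
  have hb_ne20 : b ≠ 20 := by
    rintro rfl; simp only [hf] at hb0; norm_num at hb0
  have hc_ne20 : c ≠ 20 := by
    rintro rfl; simp only [hf] at hc0; norm_num at hc0
  have hapos : 0 < a := lt_of_le_of_ne haI.1 (Ne.symm ha_ne0)
  have hab : a < b := lt_of_lt_of_le (lt_of_le_of_ne haI.2 ha_ne1) hbI.1
  have hbc : b < c := lt_of_lt_of_le (lt_of_le_of_ne hbI.2 hb_ne20) hcI.1
  have hbpos : 0 < b := hapos.trans hab
  have hcpos : 0 < c := hbpos.trans hbc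
  refine ⟨a, b, c, hapos, hbpos, hcpos, hab.ne, (hab.trans hbc).ne, hbc.ne, ?_⟩
  -- move to ℂ
  have hA : (a:ℂ) ^ 3 - 29496 * (a:ℂ) ^ 2 + 401808 * (a:ℂ) - 64 = 0 := by
    have := congrArg (Complex.ofReal) hfa
    push_cast at this; simpa only [Complex.ofReal_pow] using this
  have hB : (b:ℂ) ^ 3 - 29496 * (b:ℂ) ^ 2 + 401808 * (b:ℂ) - 64 = 0 := by
    have := congrArg (Complex.ofReal) hfb
    push_cast at this; simpa only [Complex.ofReal_pow] using this
  have hC : (c:ℂ) ^ 3 - 29496 * (c:ℂ) ^ 2 + 401808 * (c:ℂ) - 64 = 0 := by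
    have := congrArg (Complex.ofReal) hfc
    push_cast at this; simpa only [Complex.ofReal_pow] using this
  have hABne : (a:ℂ) ≠ (b:ℂ) := by
    simp only [Ne, Complex.ofReal_inj]; exact hab.ne
  have hACne : (a:ℂ) ≠ (c:ℂ) := by
    simp only [Ne, Complex.ofReal_inj]; exact (hab.trans hbc).ne
  have hBCne : (b:ℂ) ≠ (c:ℂ) := by
    simp only [Ne, Complex.ofReal_inj]; exact hbc.ne
  -- Vieta relations
  have q1 : (a:ℂ) ^ 2 + (a:ℂ) * (b:ℂ) + (b:ℂ) ^ 2 - 29496 * ((a:ℂ) + (b:ℂ)) + 401808 = 0 := by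
    have h : ((a:ℂ) - (b:ℂ)) * ((a:ℂ) ^ 2 + (a:ℂ) * (b:ℂ) + (b:ℂ) ^ 2 - 29496 * ((a:ℂ) + (b:ℂ)) + 401808) = 0 := by
      linear_combination hA - hB
    rcases mul_eq_zero.mp h with h' | h'
    · exact absurd (sub_eq_zero.mp h') hABne
    · exact h'
  have q2 : (a:ℂ) ^ 2 + (a:ℂ) * (c:ℂ) + (c:ℂ) ^ 2 - 29496 * ((a:ℂ) + (c:ℂ)) + 401808 = 0 := by
    have h : ((a:ℂ) - (c:ℂ)) * ((a:ℂ) ^ 2 + (a:ℂ) * (c:ℂ) + (c:ℂ) ^ 2 - 29496 * ((a:ℂ) + (c:ℂ)) + 401808) = 0 := by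
      linear_combination hA - hC
    rcases mul_eq_zero.mp h with h' | h'
    · exact absurd (sub_eq_zero.mp h') hACne
    · exact h'
  have e1 : (a:ℂ) + (b:ℂ) + (c:ℂ) = 29496 := by
    have h : ((b:ℂ) - (c:ℂ)) * ((a:ℂ) + (b:ℂ) + (c:ℂ) - 29496) = 0 := by
      linear_combination q1 - q2
    rcases mul_eq_zero.mp h with h' | h'
    · exact absurd (sub_eq_zero.mp h') hBCne
    · exact sub_eq_zero.mp h'
  have e2 : (a:ℂ) * (b:ℂ) + (b:ℂ) * (c:ℂ) + (c:ℂ) * (a:ℂ) = 401808 := by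
    linear_combination -q1 + ((a:ℂ) + (b:ℂ)) * e1
  have e3 : (a:ℂ) * (b:ℂ) * (c:ℂ) = 64 := by
    linear_combination hA - (a:ℂ) ^ 2 * e1 + (a:ℂ) * e2
  intro z
  have key : z ^ 3 - 29496 * z ^ 2 + 401808 * z - 64 = (z - (a:ℂ)) * (z - (b:ℂ)) * (z - (c:ℂ)) := by
    linear_combination z ^ 2 * e1 - z * e2 + e3
  constructor
  · intro hz
    rw [key] at hz
    rcases mul_eq_zero.mp hz with h | h
    · rcases mul_eq_zero.mp h with h' | h'
      · exact Or.inl (sub_eq_zero.mp h')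
      · exact Or.inr (Or.inl (sub_eq_zero.mp h'))
    · exact Or.inr (Or.inr (sub_eq_zero.mp h))
  · rintro (rfl | rfl | rfl)
    · exact hA
    · exact hB
    · exact hC
end

section
/- Let Q(T) = 4237743313/721278 − (33629825/77976)·T + (84371/5770224)·T². For every z ∈ ℂ satisfying 64 − 401808·z^{18} + 29496·z^{36} − z^{54} = 0 (that is, P(z^{18}) = 0 where P(T) = 64 − 401808T + 29496T² − T³), one has 3456^{1/9} · conj(z) = z^{17} · Q(z^{18}), where conj denotes complex conjugation and 3456^{1/9} is the positive real ninth root of 3456. -/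


lemma key_pow (a : ℝ) (hP : 64 - 401808 * a + 29496 * a ^ 2 - a ^ 3 = 0) :
    (a * (4237743313 / 721278 - (33629825 / 77976) * a + (84371 / 5770224) * a ^ 2)) ^ 9
      = 3456 * a := by
  linear_combination ((-54/1 : ℝ) * a - (678051/2 : ℝ) * a ^ 2 - (17027695665/8 : ℝ) * a ^ 3 - (213805760643549/16 : ℝ) * a ^ 4 - (10738482571855736415/128 : ℝ) * a ^ 5 - (67418089904918041306227/128 : ℝ) * a ^ 6 - (1693050695389692458153519373/512 : ℝ) * a ^ 7 - (170068339889316289826462815321419/8192 : ℝ) * a ^ 8 + (5153353981736092898281133924768254495613703943108259675243558190543397811252134475/422682394608641126291641882992253513730966642836107264 : ℝ) * a ^ 9 - (14124761254582654762348402240109722241871891711031102323181114074172677237796735433/4508612209158838680444180085250704146463644190251810816 : ℝ) * a ^ 10 + (4148753166348355445719820024238444272450581681929316485713556308072716411084518355/9017224418317677360888360170501408292927288380503621632 : ℝ) * a ^ 11 - (142847039827423528163387486903909964212829745201507077147996724182301474984478381/3381459156869129010333135063938028109847733142688858112 : ℝ) * a ^ 12 + (716690718958209120308510558596852377778632761526606951069802140653777343533054069/288551181386165675548427525456045065373673228176115892224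 : ℝ) * a ^ 13 - (105461238812972406589672194402455010145238645229526294335273590350558338818621471/1154204725544662702193710101824180261494692912704463568896 : ℝ) * a ^ 14 + (26676699616352936155455533726826800946513808588848066235295441917845233425637857/13850456706535952426324521221890163137936314952453562826752 : ℝ) * a ^ 15 - (55269948700744129705136567591279572347293387660469815529616407817635424963355/3077879268119100539183226938197814030652514433878569517056 : ℝ) * a ^ 16 + (7376605299578309317377042053532021771985659452404456890631160453719680283/1538939634059550269591613469098907015326257216939284758528 : ℝ) * a ^ 17 - (7838053232951253876595074877400656419589222622208126234316792833350413/13850456706535952426324521221890163137936314952453562826752 : ℝ) * a ^ 18 + (1413979955318634373404280446505724727367002858964565138313878640013/36934551217429206470198723258373768367830173206542834204672 : ℝ) * a ^ 19 - (119701410378616856896968240635542164609679477863872097038040443/73869102434858412940397446516747536735660346413085668409344 : ℝ) * a ^ 20 + (2433362190150259554757705664886614694880713853288666642625/55401826826143809705298084887560652551745259809814251307008 : ℝ) * a ^ 21 - (219922227986652990540573827979990701359369198634223881/295476409739433651761589786066990146942641385652342673637376 : ℝ) * a ^ 22 + (8520020447797055473767448008739564376968136164979/1181905638957734607046359144267960587770565542609370694549504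 : ℝ) * a ^ 23 - (216640060944974726530965356383773635498559731/7091433833746407642278154865607763526623393255656224167297024 : ℝ) * a ^ 24) * hP

lemma im_zero (a b : ℝ)
    (hre : 64 - 401808 * a + 29496 * (a ^ 2 - b ^ 2) - (a ^ 3 - 3 * a * b ^ 2) = 0)
    (him : b * (-401808 + 58992 * a - 3 * a ^ 2 + b ^ 2) = 0) : b = 0 := by
  by_contra hb
  have hb2 : b ^ 2 = 3 * a ^ 2 - 58992 * a + 401808 := by
    have h0 := (mul_eq_zero.mp him).resolve_left hb
    linarith
  have hf : 8 * a ^ 3 - 235968 * a ^ 2 + 1740831648 * a - 11851728704 = 0 := by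
    linear_combination hre + (29496 - 3 * a) * hb2
  -- a > 6.814
  have h1 : (3407 : ℝ) / 500 < a := by
    by_contra h
    push_neg at h
    nlinarith [mul_nonneg (sub_nonneg.2 h) (sq_nonneg (a - 14745)), sq_nonneg (a - 14745), sub_nonneg.2 h]
  -- a < 14748
  have h2 : a < 14748 := by
    by_contra h
    push_neg at h
    nlinarith [mul_nonneg (mul_nonneg (sub_nonneg.2 h) (sub_nonneg.2 h)) (sub_nonneg.2 h), sq_nonneg (a - 14748), sub_nonneg.2 h]
  have hbne : b ^ 2 ≠ 0 := pow_ne_zero 2 hb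
  have hbpos : 0 < b ^ 2 := lt_of_le_of_ne (sq_nonneg b) (Ne.symm hbne)
  nlinarith [mul_pos (sub_pos.2 h1) (sub_pos.2 h2), hbpos, hb2]


/-- for every `z ∈ ℂ` with `P(z^18) = 0`, where
`P(T) = 64 − 401808 T + 29496 T² − T³`, one has
`3456^{1/9} · conj(z) = z^17 · Q(z^18)`, with
`Q(T) = 4237743313/721278 − (33629825/77976) T + (84371/5770224) T²`. -/
theorem freudenthal_conjugation (z : ℂ)
    (hz : 64 - 401808 * z ^ 18 + 29496 * z ^ 36 - z ^ 54 = 0) :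
    (((3456 : ℝ) ^ ((1 : ℝ) / 9) : ℝ) : ℂ) * starRingEnd ℂ z =
      z ^ 17 * (4237743313 / 721278 - (33629825 / 77976) * z ^ 18 +
        (84371 / 5770224) * z ^ 36) := by
  set w : ℂ := z ^ 18 with hw
  have h1 : 64 - 401808 * w + 29496 * w ^ 2 - w ^ 3 = 0 := by
    rw [hw]; linear_combination hz
  set a : ℝ := w.re with ha
  set b : ℝ := w.im with hbdef
  have hw2 : w = (a : ℂ) + (b : ℂ) * Complex.I := (Complex.re_add_im w).symm
  rw [hw2] at h1
  have hre : 64 - 401808 * a + 29496 * (a ^ 2 - b ^ 2) - (a ^ 3 - 3 * a * b ^ 2) = 0 := by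
    have h2 := congrArg Complex.re h1
    simp [Complex.add_re, Complex.mul_re, Complex.mul_im, pow_succ, pow_zero] at h2
    linear_combination h2
  have him : b * (-401808 + 58992 * a - 3 * a ^ 2 + b ^ 2) = 0 := by
    have := congrArg Complex.im h1
    simp [Complex.add_im, Complex.mul_re, Complex.mul_im, pow_succ, pow_zero] at this
    linear_combination this
  have hb0 : b = 0 := im_zero a b hre him
  rw [hb0] at hw2
  simp only [Complex.ofReal_zero, zero_mul, add_zero] at hw2
  -- real cubic
  have hP : 64 - 401808 * a + 29496 * a ^ 2 - a ^ 3 = 0 := by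
    rw [hb0] at hre; linarith [hre]
  have hapos : 0 < a := by
    by_contra h
    push_neg at h
    nlinarith [mul_nonneg (neg_nonneg.2 h) (sq_nonneg a), sq_nonneg a]
  -- |z|^2
  have hzabs : ‖z‖ ^ 18 = a := by
    have : ‖w‖ = a := by rw [hw2, Complex.norm_real, Real.norm_eq_abs, abs_of_pos hapos]
    rw [hw, norm_pow] at this
    exact this
  set s : ℝ := ‖z‖ ^ 2 with hs
  have hs9 : s ^ 9 = a := by rw [hs, ← pow_mul]; exact hzabs
  have hsnn : 0 ≤ s := sq_nonneg _
  set c : ℝ := (3456 : ℝ) ^ ((1 : ℝ) / 9) with hc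
  have hcnn : 0 ≤ c := Real.rpow_nonneg (by norm_num) _
  have hc9 : c ^ 9 = 3456 := by
    rw [hc, ← Real.rpow_natCast ((3456:ℝ) ^ ((1:ℝ)/9)) 9, ← Real.rpow_mul (by norm_num : (0:ℝ) ≤ 3456)]
    norm_num
  set u : ℝ := a * (4237743313 / 721278 - (33629825 / 77976) * a + (84371 / 5770224) * a ^ 2) with hu
  have hu9 : u ^ 9 = 3456 * a := key_pow a hP
  have hcs : (c * s) ^ 9 = 3456 * a := by rw [mul_pow, hc9, hs9]
  have hucs : u = c * s := by
    have h9 : Odd (9:ℕ) := by decide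
    exact h9.strictMono_pow.injective (by rw [hu9, hcs])
  -- z ≠ 0
  have hzne : z ≠ 0 := by
    intro h
    rw [h] at hzabs
    simp at hzabs
    exact absurd hzabs.symm (ne_of_gt hapos)
  -- conj z * z = s
  have hconj : (starRingEnd ℂ) z * z = (s : ℂ) := by
    rw [mul_comm, Complex.mul_conj, hs]
    norm_cast
    exact (Complex.sq_norm z).symm
  apply mul_right_cancel₀ hzne
  have hz18 : z ^ 18 = (a : ℂ) := hw2 ▸ hw
  calc ((c : ℝ) : ℂ) * starRingEnd ℂ z * z = (c : ℂ) * ((starRingEnd ℂ) z * z) := by ring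
    _ = ((c * s : ℝ) : ℂ) := by rw [hconj]; push_cast; ring
    _ = ((u : ℝ) : ℂ) := by rw [hucs]
    _ = z ^ 17 * (4237743313 / 721278 - (33629825 / 77976) * z ^ 18 +
        (84371 / 5770224) * z ^ 36) * z := by
      have h36 : z ^ 36 = (a : ℂ) ^ 2 := by rw [← hz18]; ring
      have h54 : z ^ 54 = (a : ℂ) ^ 3 := by rw [← hz18]; ring
      have h18' : z ^ 17 * z = (a : ℂ) := by rw [← hz18]; ring
      rw [hu]
      push_cast
      linear_combination (-(4237743313 / 721278 : ℂ)) * h18' + (33629825 / 77976 : ℂ) * h36 - (84371 / 5770224 : ℂ) * h54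
end

section
/- The set of points (x, y) ∈ ℂ² satisfying the two equations y·(3y − 2x²) = 0 and 2y²x² − 2yx⁴ + x⁶ − 2y³ + x = 0 is exactly the union of the single point (0,0), the five points (s, 0) with s⁵ = −1, and the five points (s, (2/3)s²) with s⁵ = 27. -/
/-- the solution set in `ℂ²` of `y(3y − 2x²) = 0` and
`2y²x² − 2yx⁴ + x⁶ − 2y³ + x = 0` is the union of the point `(0,0)`, the five points
`(s, 0)` with `s⁵ = −1`, and the five points `(s, (2/3)s²)` with `s⁵ = 27`. -/
theorem symplectic_scheme_points :
    {p : ℂ × ℂ | p.2 * (3 * p.2 - 2 * p.1 ^ 2) = 0 ∧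
        2 * p.2 ^ 2 * p.1 ^ 2 - 2 * p.2 * p.1 ^ 4 + p.1 ^ 6 - 2 * p.2 ^ 3 + p.1 = 0} =
      {((0 : ℂ), (0 : ℂ))} ∪
        {p : ℂ × ℂ | p.1 ^ 5 = -1 ∧ p.2 = 0} ∪
        {p : ℂ × ℂ | p.1 ^ 5 = 27 ∧ p.2 = (2 / 3) * p.1 ^ 2} := by
  ext ⟨x, y⟩
  simp only [Set.mem_setOf_eq, Set.mem_union, Set.mem_singleton_iff, Prod.mk.injEq]
  constructor
  · rintro ⟨h1, h2⟩
    rcases mul_eq_zero.mp h1 with hy | hy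
    · subst hy
      have hx : x * (x ^ 5 + 1) = 0 := by linear_combination h2
      rcases mul_eq_zero.mp hx with hx | hx
      · exact Or.inl (Or.inl ⟨hx, rfl⟩)
      · exact Or.inl (Or.inr ⟨by linear_combination hx, rfl⟩)
    · have hy' : y = (2 / 3) * x ^ 2 := by linear_combination (1/3) * hy
      subst hy'
      have hx : x * (27 - x ^ 5) = 0 := by linear_combination 27 * h2
      rcases mul_eq_zero.mp hx with hx | hx
      · subst hx; exact Or.inl (Or.inl ⟨rfl, by ring⟩)
      · exact Or.inr ⟨by linear_combination -hx, rfl⟩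
  · rintro ((⟨hx, hy⟩ | ⟨hx, hy⟩) | ⟨hx, hy⟩) <;> subst hy
    · subst hx; exact ⟨by ring, by ring⟩
    · exact ⟨by ring, by linear_combination x * hx⟩
    · exact ⟨by ring, by linear_combination (-1/27 : ℂ) * x * hx⟩
end

section
/- Let I be the ideal of the polynomial ring ℂ[x, y] generated by y·(3y − 2x²) and 2y²x² − 2yx⁴ + x⁶ − 2y³ + x. Then the quotient ring ℂ[x, y]/I is a ℂ-vector space of dimension 12, and it is not reduced, i.e. it contains a nonzero nilpotent element. -/
set_option maxHeartbeats 4000000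

open MvPolynomial

noncomputable section SymplecticAux

def srP : Polynomial ℂ :=
  Polynomial.X ^ 10 - 60 * Polynomial.X ^ 7 - 90 * Polynomial.X ^ 6 - 122 * Polynomial.X ^ 5
    - 60 * Polynomial.X ^ 2 - 90 * Polynomial.X - 123

def sP : Polynomial ℂ :=
  Polynomial.X ^ 12 - 60 * Polynomial.X ^ 9 - 90 * Polynomial.X ^ 8 - 122 * Polynomial.X ^ 7
    - 60 * Polynomial.X ^ 4 - 90 * Polynomial.X ^ 3 - 123 * Polynomial.X ^ 2

def sa : Polynomial ℂ := Polynomial.C ((31811104596986 : ℂ) / 5700941850079337) * Polynomial.X ^ 11 + Polynomial.C ((427828277694 : ℂ) / 139047362197057) * Polynomial.X ^ 10 + Polynomial.C ((2076871020 : ℂ) / 3391399077977) * Polynomial.X ^ 9 + Polynomial.C ((-1952156758292192 : ℂ) / 5700941850079337) * Polynomial.X ^ 8 + Polynomial.C ((-3854662935398046 : ℂ) / 5700941850079337) * Polynomial.X ^ 7 + Polynomial.C ((-5669130745482351 : ℂ) / 5700941850079337) * Polynomial.X ^ 6 + Polynomial.C ((427828277694 : ℂ) / 139047362197057) * Polynomial.X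 ^ 5 + Polynomial.C ((2076871020 : ℂ) / 3391399077977) * Polynomial.X ^ 4 + Polynomial.C ((-1952156758292192 : ℂ) / 5700941850079337) * Polynomial.X ^ 3 + Polynomial.C ((-3854662935398046 : ℂ) / 5700941850079337) * Polynomial.X ^ 2

def sc1 : Polynomial ℂ := Polynomial.C ((64382264006619159073912741117482650066512 : ℂ) / 185284817297163355534552402784305579563555125753) * Polynomial.X ^ 21 + Polynomial.C ((2597635650156144586588631694913965144144 : ℂ) / 4519141885296667208159814702056233647891588433) * Polynomial.X ^ 20 + Polynomial.C ((47545754238856245906641887065586110096 : ℂ) / 110222972812113834345361334196493503607111913) * Polynomial.X ^ 19 + Polynomial.C ((-7955760611343156975898230397548075239898384 : ℂ) / 185284817297163355534552402784305579563555125753) * Polynomial.X ^ 18 + Polynomial.C ((-24282492336398141163682708842730634865343632 : ℂ) / 185284817297163355534552402784305579563555125753) * Polynomial.X ^ 17 + Polynomial.C ((-44200743777120153391889047622232475543621192 : ℂ) / 185284817297163355534552402784305579563555125753) * Polynomial.X ^ 16 + Polynomial.C ((218676003426627774257810433071951377777167312 : ℂ) / 185284817297163355534552402784305579563555125753) * Polynomial.X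 ^ 15 + Polynomial.C ((1089514517197395932762534389153299015210216888 : ℂ) / 185284817297163355534552402784305579563555125753) * Polynomial.X ^ 14 + Polynomial.C ((2903958718802815762081238034689135882008429440 : ℂ) / 185284817297163355534552402784305579563555125753) * Polynomial.X ^ 13 + Polynomial.C ((3813680341623714876930666547540991740115637344 : ℂ) / 185284817297163355534552402784305579563555125753) * Polynomial.X ^ 12 + Polynomial.C ((2972518280088138083894363913091938688603905156 : ℂ) / 185284817297163355534552402784305579563555125753) * Polynomial.X ^ 11 + Polynomial.C ((535352199159625206482401211211045243690061200 : ℂ) / 185284817297163355534552402784305579563555125753) * Polynomial.X ^ 10 + Polynomial.C ((2067336675666781042874582910017620835007362232 : ℂ) / 185284817297163355534552402784305579563555125753) * Polynomial.X ^ 9 + Polynomial.C ((4502933468688126623973030516899283005810776100 : ℂ) / 185284817297163355534552402784305579563555125753) * Polynomial.X ^ 8 + Polynomial.C ((3203409416218680302925996301349851615334179636 : ℂ) / 185284817297163355534552402784305579563555125753) * Polynomial.X ^ 7 + Polynomial.C ((-69935769907631399235280003856238211136826414 : ℂ) / 4519141885296667208159814702056233647891588433) * Polynomial.X ^ 6 +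 Polynomial.C ((-4316640454278588672597286678643501044810558624 : ℂ) / 185284817297163355534552402784305579563555125753) * Polynomial.X ^ 5 + Polynomial.C ((1303309350992827306767774788977756984251270060 : ℂ) / 185284817297163355534552402784305579563555125753) * Polynomial.X ^ 4 + Polynomial.C ((389245325011463635041002121035760 : ℂ) / 54633740540994489108897279718435489) * Polynomial.X ^ 3 + Polynomial.C ((-6504581383222803540308987754124 : ℂ) / 1332530257097426563631640968742329) * Polynomial.X ^ 2 + Polynomial.C ((-3537905004884382 : ℂ) / 233738615853252817) * Polynomial.X + Polynomial.C ((-1 : ℂ) / 41)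

def sc2 : Polynomial ℂ := Polynomial.C ((1036268979654502223488276122506151840157897566724804348334410381358628009505961536 : ℂ) / 34330463520843204986957018126155495718161948748238605724953013025880517133843331736479643817009) * Polynomial.X ^ 54 + Polynomial.C ((83620832110679352790185206176936313226410209407443189006905178568893375633652864 : ℂ) / 837328378557151341145293125028182822394193871908258676218366171362939442288861749670235215049) * Polynomial.X ^ 53 + Polynomial.C ((3217479393640471393647909980997427000285330660112516213893790694033589551725760 : ℂ) / 20422643379442715637690076220199581034004728583128260395569906618608279080216140235859395489) * Polynomial.X ^ 52 + Polynomial.C ((-314024981469582145249293949112367903181667707589491828644786044216897887963633696512 : ℂ) / 34330463520843204986957018126155495718161948748238605724953013025880517133843331736479643817009) * Polynomial.X ^ 51 + Polynomial.C ((-1502711824844875245475506604734933296713521157920434998177004725488995632985318373696 : ℂ) / 34330463520843204986957018126155495718161948748238605724953013025880517133843331736479643817009) * Polynomial.X ^ 50 + Polynomial.C ((-3793382272379717007794731973542940235230651286796183559716124510964244266026654484160 : ℂ) / 34330463520843204986957018126155495718161948748238605724953013025880517133843331736479643817009) * Polynomial.X ^ 49 + Polynomial.C ((33744707278802637751954031328120524765209887452381451154780697287635759534957507904128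 : ℂ) / 34330463520843204986957018126155495718161948748238605724953013025880517133843331736479643817009) * Polynomial.X ^ 48 + Polynomial.C ((235774997284683209395066774560068161942727926202845929298527988233708138188865992881920 : ℂ) / 34330463520843204986957018126155495718161948748238605724953013025880517133843331736479643817009) * Polynomial.X ^ 47 + Polynomial.C ((804506849450046867918118686902483944411050734593607155770766443050882444965956514572096 : ℂ) / 34330463520843204986957018126155495718161948748238605724953013025880517133843331736479643817009) * Polynomial.X ^ 46 + Polynomial.C ((-764991053403174627789347012668226369893370186333312593993039058980118989215710364288512 : ℂ) / 34330463520843204986957018126155495718161948748238605724953013025880517133843331736479643817009) * Polynomial.X ^ 45 + Polynomial.C ((-15967100439107981424424559278164739949141801372392750408126838601102741383156665874151056 : ℂ) / 34330463520843204986957018126155495718161948748238605724953013025880517133843331736479643817009) * Polynomial.X ^ 44 + Polynomial.C ((-73400651228545960319333486391446754705642123187651144056269636664991077489475691226096832 : ℂ) / 34330463520843204986957018126155495718161948748238605724953013025880517133843331736479643817009) * Polynomial.X ^ 43 + Polynomial.C ((-122287940119541872115594418027994430297018572426776807162288188441589990322599393632427360 : ℂ) / 34330463520843204986957018126155495718161948748238605724953013025880517133843331736479643817009)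 * Polynomial.X ^ 42 + Polynomial.C ((304589041101111059561680894486812695414546523850592709382419798309049591721041598730648768 : ℂ) / 34330463520843204986957018126155495718161948748238605724953013025880517133843331736479643817009) * Polynomial.X ^ 41 + Polynomial.C ((2797392831898004909022597356693931154434355277247562949300781767791570415138900474726412304 : ℂ) / 34330463520843204986957018126155495718161948748238605724953013025880517133843331736479643817009) * Polynomial.X ^ 40 + Polynomial.C ((9026569794295256491468918461547370717405441498270418158054552741097529023082905660675173696 : ℂ) / 34330463520843204986957018126155495718161948748238605724953013025880517133843331736479643817009) * Polynomial.X ^ 39 + Polynomial.C ((13776836841112947302149210363112353994434783400472364937436867741526486024843648082220751168 : ℂ) / 34330463520843204986957018126155495718161948748238605724953013025880517133843331736479643817009) * Polynomial.X ^ 38 + Polynomial.C ((-14580806172259385879873186313429301321300530379159944270818299795950018457297309502029111840 : ℂ) / 34330463520843204986957018126155495718161948748238605724953013025880517133843331736479643817009) * Polynomial.X ^ 37 + Polynomial.C ((-150297059741518386147848353054958179028431180768365020633821193116826938527694671205568229152 : ℂ) / 34330463520843204986957018126155495718161948748238605724953013025880517133843331736479643817009) * Polynomial.X ^ 36 + Polynomial.C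 ((-489884587112766714640863311255641327644994395518215004448365940492250772511448357063834380896 : ℂ) / 34330463520843204986957018126155495718161948748238605724953013025880517133843331736479643817009) * Polynomial.X ^ 35 + Polynomial.C ((-1047015640406708953023711590431494932095487909090880538126595985381497092549921970002278635860 : ℂ) / 34330463520843204986957018126155495718161948748238605724953013025880517133843331736479643817009) * Polynomial.X ^ 34 + Polynomial.C ((-1669324535893526161123097019285796403534975204623789459333683188766557733904996090125752024280 : ℂ) / 34330463520843204986957018126155495718161948748238605724953013025880517133843331736479643817009) * Polynomial.X ^ 33 + Polynomial.C ((-2120048828332022204037125387720160475167162664328546954498394151297714230743498704719344979380 : ℂ) / 34330463520843204986957018126155495718161948748238605724953013025880517133843331736479643817009) * Polynomial.X ^ 32 + Polynomial.C ((-2427026067110660800983406191147793962628977786344393917285864300429806456742413576355374712704 : ℂ) / 34330463520843204986957018126155495718161948748238605724953013025880517133843331736479643817009) * Polynomial.X ^ 31 + Polynomial.C ((-2913113691286126020938488665030950607879555872492984444871446074193619248977756002875754291568 : ℂ) / 34330463520843204986957018126155495718161948748238605724953013025880517133843331736479643817009) * Polynomial.X ^ 30 + Polynomial.C ((-3687077213845613923955898987821456467120257219334208683313656573374164098414247660158070834116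 : ℂ) / 34330463520843204986957018126155495718161948748238605724953013025880517133843331736479643817009) * Polynomial.X ^ 29 + Polynomial.C ((-3952681384416221141298154222854729032146701890707418549234628736468558164888459297399729197996 : ℂ) / 34330463520843204986957018126155495718161948748238605724953013025880517133843331736479643817009) * Polynomial.X ^ 28 + Polynomial.C ((-2933404696432910002628088449177726232577367993198625570092478575150292615571542537106756662392 : ℂ) / 34330463520843204986957018126155495718161948748238605724953013025880517133843331736479643817009) * Polynomial.X ^ 27 + Polynomial.C ((-1301568465878295393509698017490798115309840621509322270250597661692312767530077770110005034676 : ℂ) / 34330463520843204986957018126155495718161948748238605724953013025880517133843331736479643817009) * Polynomial.X ^ 26 + Polynomial.C ((-973218751853085149035911802225209202034116341999472056629773553435386115816328408087416814972 : ℂ) / 34330463520843204986957018126155495718161948748238605724953013025880517133843331736479643817009) * Polynomial.X ^ 25 + Polynomial.C ((-1820876177052283397870404704870820678892594155200302879982333656412474163824666492872712624683 : ℂ) / 34330463520843204986957018126155495718161948748238605724953013025880517133843331736479643817009) * Polynomial.X ^ 24 + Polynomial.C ((-32097353804188746402593438867835820042899716469565432279591010510330421669973165394988623552 : ℂ) /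 837328378557151341145293125028182822394193871908258676218366171362939442288861749670235215049) * Polynomial.X ^ 23 + Polynomial.C ((1533296188139158025484902098585855692133034630376692123507500628546672994329876650579635232732 : ℂ) / 34330463520843204986957018126155495718161948748238605724953013025880517133843331736479643817009) * Polynomial.X ^ 22 + Polynomial.C ((77979855116000151420725901767113075106569783975818587887044483983200771062850245157234725116 : ℂ) / 837328378557151341145293125028182822394193871908258676218366171362939442288861749670235215049) * Polynomial.X ^ 21 + Polynomial.C ((1288981225672925924082196694694375043427697450162854573640453974581353072957376887034068545054 : ℂ) / 34330463520843204986957018126155495718161948748238605724953013025880517133843331736479643817009) * Polynomial.X ^ 20 + Polynomial.C ((-1004653034536105791820269570110194945939586723796639841796621197251548639427741856154196596838 : ℂ) / 34330463520843204986957018126155495718161948748238605724953013025880517133843331736479643817009) * Polynomial.X ^ 19 + Polynomial.C ((442481909063038828050828895689318562079572753299817098908961239973333559236516760025832408422 : ℂ) / 34330463520843204986957018126155495718161948748238605724953013025880517133843331736479643817009) * Polynomial.X ^ 18 + Polynomial.C ((2910757773247215245450671841033180157027313983190841611347169289716473155147161927054721348420 : ℂ) / 34330463520843204986957018126155495718161948748238605724953013025880517133843331736479643817009)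 * Polynomial.X ^ 17 + Polynomial.C ((2064329304360636617364774235123054150593774257902735324918494872366389854947705074245043819456 : ℂ) / 34330463520843204986957018126155495718161948748238605724953013025880517133843331736479643817009) * Polynomial.X ^ 16 + Polynomial.C ((-1088965697524943252997340406216172379518825996726482857345270766667017331178956635020964593386 : ℂ) / 34330463520843204986957018126155495718161948748238605724953013025880517133843331736479643817009) * Polynomial.X ^ 15 + Polynomial.C ((-1698411018437784333451900612281735755106902001610597438873015613771103884009826917946077360541 : ℂ) / 34330463520843204986957018126155495718161948748238605724953013025880517133843331736479643817009) * Polynomial.X ^ 14 + Polynomial.C ((50791280058309376829733575785831150625585357788264481550255953009693654567561159182458551898 : ℂ) / 34330463520843204986957018126155495718161948748238605724953013025880517133843331736479643817009) * Polynomial.X ^ 13 + Polynomial.C ((1224938539323531135825836454618606582637702391401362632877786566651971620371715300935264195830 : ℂ) / 34330463520843204986957018126155495718161948748238605724953013025880517133843331736479643817009) * Polynomial.X ^ 12 + Polynomial.C ((217327703484105698110913686272825302306143801436336290668502302321159289153724584743696280740 : ℂ) / 34330463520843204986957018126155495718161948748238605724953013025880517133843331736479643817009) * Polynomial.X ^ 11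 + Polynomial.C ((-1312156653078016700579609190665099020328109246988227144137551554217465860823966811630763252684 : ℂ) / 34330463520843204986957018126155495718161948748238605724953013025880517133843331736479643817009) * Polynomial.X ^ 10 + Polynomial.C ((-387507885774680777265387294462926002396488911370284469878833432861417253673044764 : ℂ) / 10122802634398790577116560243821938257827719244360967909531676557175659435813048217) * Polynomial.X ^ 9 + Polynomial.C ((3323856265314173486167154810831379581719047992928729209179994987722290221551866 : ℂ) / 246897625229238794563818542532242396532383396203926046573943330662820961849098737) * Polynomial.X ^ 8 + Polynomial.C ((80123944774073529210595812044993352875983781525762359877692787096 : ℂ) / 1775636886080133736758886722120959444965187407564201840819996344241) * Polynomial.X ^ 7 + Polynomial.C ((1090316156847687218704121547539882310334451943662648836548737162 : ℂ) / 43308216733661798457533822490755108413785058721078093678536496201) * Polynomial.X ^ 6 + Polynomial.C ((-5390570257699378921569518319734691619399797181796 : ℂ) / 311463777876531600653582589080417679246336166390793) * Polynomial.X ^ 5 + Polynomial.C ((45537404888737161081308119676084803493647134145 : ℂ) / 7596677509183697576916648514156528762105760155873) * Polynomial.X ^ 4 + Polynomial.C ((957553433768655992891998802700334 : ℂ) /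 54633740540994489108897279718435489) * Polynomial.X ^ 3 + Polynomial.C ((7585054965410541412 : ℂ) / 392914613249317985377) * Polynomial.X ^ 2 + Polynomial.C ((143958590244848042 : ℂ) / 9583283249983365497) * Polynomial.X + Polynomial.C ((1284887645132682 : ℂ) / 233738615853252817)

def su1 : MvPolynomial (Fin 2) ℂ := C (-4 : ℂ) * X 0 ^ 4 * X 1 ^ 8 + C (-48 : ℂ) * X 0 ^ 5 * X 1 ^ 7 + C (2 : ℂ) * X 0 ^ 2 * X 1 ^ 9 + C (24 : ℂ) * X 0 ^ 3 * X 1 ^ 8 + C (-396 : ℂ) * X 0 ^ 4 * X 1 ^ 7 + C (-1320 : ℂ) * X 0 ^ 5 * X 1 ^ 6 + C (-5 : ℂ) * X 1 ^ 10 + C (-60 : ℂ) * X 0 * X 1 ^ 9 + C (198 : ℂ) * X 0 ^ 2 * X 1 ^ 8 + C (660 : ℂ) * X 0 ^ 3 * X 1 ^ 7 + C (-4455 : ℂ) * X 0 ^ 4 * X 1 ^ 6 + C (-7160 : ℂ) * X 0 ^ 5 * X 1 ^ 5 + C (-528 : ℂ) * X 1 ^ 9 + C (-1760 : ℂ) *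 X 0 * X 1 ^ 8 + C (1980 : ℂ) * X 0 ^ 2 * X 1 ^ 7 + C (3184 : ℂ) * X 0 ^ 3 * X 1 ^ 6 + C (-13272 : ℂ) * X 0 ^ 4 * X 1 ^ 5 + C (-12096 : ℂ) * X 0 ^ 5 * X 1 ^ 4 + C ((-495 : ℂ) / 2) * X 0 ^ 6 * X 1 ^ 3 + C (-110 : ℂ) * X 0 ^ 7 * X 1 ^ 2 + C (-33 : ℂ) * X 0 ^ 8 * X 1 + C (-6 : ℂ) * X 0 ^ 9 + C (-5940 : ℂ) * X 1 ^ 8 + C (-9544 : ℂ) * X 0 * X 1 ^ 7 + C (5712 : ℂ) * X 0 ^ 2 * X 1 ^ 6 + C (5256 : ℂ) * X 0 ^ 3 * X 1 ^ 5 + C (-12915 : ℂ) * X 0 ^ 4 * X 1 ^ 4 + C (-7140 : ℂ) * X 0 ^ 5 * X 1 ^ 3 + C ((-99 : ℂ) / 2) * X 0 ^ 6 * X 1 ^ 2 + C (-9 : ℂ) * X 0 ^ 7 * X 1 + C (-1 : ℂ) * X 0 ^ 8 + C (-17100 : ℂ) * X 1 ^ 7 + C (-15516 : ℂ) * X 0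 * X 1 ^ 6 + C (5715 : ℂ) * X 0 ^ 2 * X 1 ^ 5 + C (3240 : ℂ) * X 0 ^ 3 * X 1 ^ 4 + C (-4351 : ℂ) * X 0 ^ 4 * X 1 ^ 3 + C (-1162 : ℂ) * X 0 ^ 5 * X 1 ^ 2 + C ((-1 : ℂ) / 2) * X 0 ^ 6 * X 1 + C (-16755 : ℂ) * X 1 ^ 6 + C (-6570 : ℂ) * X 0 * X 1 ^ 5 + C (5807 : ℂ) * X 0 ^ 2 * X 1 ^ 4 + C (4334 : ℂ) * X 0 ^ 3 * X 1 ^ 3 + C (2183 : ℂ) * X 0 ^ 4 * X 1 ^ 2 + C (870 : ℂ) * X 0 ^ 5 * X 1 + C (270 : ℂ) * X 0 ^ 6 + C (-5743 : ℂ) * X 1 ^ 5 + C (6724 : ℂ) * X 0 * X 1 ^ 4 + C (7095 : ℂ) * X 0 ^ 2 * X 1 ^ 3 + C (4245 : ℂ) * X 0 ^ 3 * X 1 ^ 2 + C (1350 : ℂ) * X 0 ^ 4 * X 1 + C (244 : ℂ) * X 0 ^ 5 + C (-447 : ℂ) * X 1 ^ 4 + C ((16165 : ℂ) / 2) * X 0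 * X 1 ^ 3 + C (4790 : ℂ) * X 0 ^ 2 * X 1 ^ 2 + C (1939 : ℂ) * X 0 ^ 3 * X 1 + C (394 : ℂ) * X 0 ^ 4 + C (-420 : ℂ) * X 1 ^ 3 + C ((5233 : ℂ) / 2) * X 0 * X 1 ^ 2 + C (747 : ℂ) * X 0 ^ 2 * X 1 + C (123 : ℂ) * X 0 ^ 3 + C (-184 : ℂ) * X 1 ^ 2 + C ((123 : ℂ) / 2) * X 0 * X 1 + C (-30 : ℂ) * X 1 + C (120 : ℂ) * X 0 + C (-41 : ℂ)

def sv1 : MvPolynomial (Fin 2) ℂ := C (-8 : ℂ) * X 1 ^ 9 + C (-96 : ℂ) * X 0 * X 1 ^ 8 + C (-792 : ℂ) * X 1 ^ 8 + C (-2640 : ℂ) * X 0 * X 1 ^ 7 + C (-8910 : ℂ) * X 1 ^ 7 + C (-14320 : ℂ) * X 0 * X 1 ^ 6 + C (-25620 : ℂ) * X 1 ^ 6 + C (-23400 : ℂ) * X 0 * X 1 ^ 5 + C (1 : ℂ) * X 0 ^ 6 + C ((-50175 : ℂ) / 2) * X 1 ^ 5 + C (-13950 : ℂ) * X 0 * X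 1 ^ 4 + C ((-17107 : ℂ) / 2) * X 1 ^ 4 + C (-2297 : ℂ) * X 0 * X 1 ^ 3 + C ((-1341 : ℂ) / 2) * X 1 ^ 3 + C (-420 : ℂ) * X 0 * X 1 ^ 2 + C (-60 : ℂ) * X 0 ^ 3 + C (-630 : ℂ) * X 1 ^ 2 + C (-352 : ℂ) * X 0 * X 1 + C (-90 : ℂ) * X 0 ^ 2 + C (-246 : ℂ) * X 1 + C (-123 : ℂ) * X 0

def su2 : MvPolynomial (Fin 2) ℂ := C ((-127244418387944 : ℂ) / 5700941850079337) * X 0 ^ 4 * X 1 ^ 7 + C ((-1399688602267384 : ℂ) / 5700941850079337) * X 0 ^ 5 * X 1 ^ 6 + C ((63622209193972 : ℂ) / 5700941850079337) * X 0 ^ 2 * X 1 ^ 8 + C ((699844301133692 : ℂ) / 5700941850079337) * X 0 ^ 3 * X 1 ^ 7 + C ((-10567828354547196 : ℂ) / 5700941850079337) * X 0 ^ 4 * X 1 ^ 6 + C ((-32194631926434300 : ℂ) / 5700941850079337) * X 0 ^ 5 * X 1 ^ 5 + C ((-159055522984930 : ℂ) / 5700941850079337) * X 1 ^ 9 + C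 ((-1749610752834230 : ℂ) / 5700941850079337) * X 0 * X 1 ^ 8 + C ((5283914177273598 : ℂ) / 5700941850079337) * X 0 ^ 2 * X 1 ^ 7 + C ((16097315963217150 : ℂ) / 5700941850079337) * X 0 ^ 3 * X 1 ^ 6 + C ((-99229004567859480 : ℂ) / 5700941850079337) * X 0 ^ 4 * X 1 ^ 5 + C ((-146043702945544540 : ℂ) / 5700941850079337) * X 0 ^ 5 * X 1 ^ 4 + C ((-14084590819601110 : ℂ) / 5700941850079337) * X 1 ^ 8 + C ((-42867706037294220 : ℂ) / 5700941850079337) * X 0 * X 1 ^ 7 + C ((44365670025427050 : ℂ) / 5700941850079337) * X 0 ^ 2 * X 1 ^ 6 + C ((65673486310868504 : ℂ) / 5700941850079337) * X 0 ^ 3 * X 1 ^ 5 + C ((-248648377525731268 : ℂ) / 5700941850079337) * X 0 ^ 4 * X 1 ^ 4 + C ((-210583384668360896 : ℂ) / 5700941850079337) * X 0 ^ 5 * X 1 ^ 3 + C ((-2624416129251345 : ℂ) / 5700941850079337) * X 0 ^ 6 * X 1 ^ 2 + C ((-874805376417115 : ℂ) / 5700941850079337) * X 0 ^ 7 * X 1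 + C ((-174961075283423 : ℂ) / 5700941850079337) * X 0 ^ 8 + C ((-132304175683751100 : ℂ) / 5700941850079337) * X 1 ^ 7 + C ((-194629633987913564 : ℂ) / 5700941850079337) * X 0 * X 1 ^ 6 + C ((107785657703585432 : ℂ) / 5700941850079337) * X 0 ^ 2 * X 1 ^ 5 + C ((92583866934607864 : ℂ) / 5700941850079337) * X 0 ^ 3 * X 1 ^ 4 + C ((-208709537693681490 : ℂ) / 5700941850079337) * X 0 ^ 4 * X 1 ^ 3 + C ((-100146484831994670 : ℂ) / 5700941850079337) * X 0 ^ 5 * X 1 ^ 2 + C ((-1314226398195699 : ℂ) / 11401883700158674) * X 0 ^ 6 * X 1 + C ((-119515901524256 : ℂ) / 5700941850079337) * X 0 ^ 7 + C ((-322384068737867400 : ℂ) / 5700941850079337) * X 1 ^ 6 + C ((-271939935665558656 : ℂ) / 5700941850079337) * X 0 * X 1 ^ 5 + C ((92577972116510310 : ℂ) / 5700941850079337) * X 0 ^ 2 * X 1 ^ 4 + C ((45123964288860450 : ℂ) / 5700941850079337) * X 0 ^ 3 * X 1 ^ 3 + C ((-46006054079593119 : ℂ) / 5700941850079337) * X 0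 ^ 4 * X 1 ^ 2 + C ((-181362687738696 : ℂ) / 139047362197057) * X 0 ^ 5 * X 1 + C ((-811010980884 : ℂ) / 139047362197057) * X 0 ^ 6 + C ((-271859704664241752 : ℂ) / 5700941850079337) * X 1 ^ 5 + C ((-73217302743011464 : ℂ) / 5700941850079337) * X 0 * X 1 ^ 4 + C ((89063911487221651 : ℂ) / 5700941850079337) * X 0 ^ 2 * X 1 ^ 3 + C ((57925903804202542 : ℂ) / 5700941850079337) * X 0 ^ 3 * X 1 ^ 2 + C ((24380096923267348 : ℂ) / 5700941850079337) * X 0 ^ 4 * X 1 + C ((3592013030413178 : ℂ) / 5700941850079337) * X 0 ^ 5 + C ((-61721380959417190 : ℂ) / 5700941850079337) * X 1 ^ 4 + C ((139894326103221662 : ℂ) / 5700941850079337) * X 0 * X 1 ^ 3 + C ((109844728748750229 : ℂ) / 5700941850079337) * X 0 ^ 2 * X 1 ^ 2 + C ((54291717152625810 : ℂ) / 5700941850079337) * X 0 ^ 3 * X 1 + C ((11588814096787307 : ℂ) / 5700941850079337) * X 0 ^ 4 + C ((-3884501649384086 : ℂ) / 5700941850079337) * X 1 ^ 3 + C ((2759556306349695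 : ℂ) / 121296635108071) * X 0 * X 1 ^ 2 + C ((65658870848802493 : ℂ) / 5700941850079337) * X 0 ^ 2 * X 1 + C ((20862055171845099 : ℂ) / 5700941850079337) * X 0 ^ 3 + C ((-5138386840469188 : ℂ) / 5700941850079337) * X 1 ^ 2 + C ((54701430050884665 : ℂ) / 11401883700158674) * X 0 * X 1 + C ((137977791502822 : ℂ) / 139047362197057) * X 0 ^ 2 + C ((-4451346819483622 : ℂ) / 5700941850079337) * X 1 + C ((-4153742040 : ℂ) / 3391399077977) * X 0 + C ((-1284887645132682 : ℂ) / 5700941850079337)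

def sv2 : MvPolynomial (Fin 2) ℂ := C ((-254488836775888 : ℂ) / 5700941850079337) * X 1 ^ 8 + C ((-2799377204534768 : ℂ) / 5700941850079337) * X 0 * X 1 ^ 7 + C ((-21135656709094392 : ℂ) / 5700941850079337) * X 1 ^ 7 + C ((-64389263852868600 : ℂ) / 5700941850079337) * X 0 * X 1 ^ 6 + C ((-198458009135718960 : ℂ) / 5700941850079337) * X 1 ^ 6 + C ((-292087405891089080 : ℂ) / 5700941850079337) * X 0 * X 1 ^ 5 + C ((-482600024727655004 : ℂ) / 5700941850079337) * X 1 ^ 5 + C ((-410669104819716412 : ℂ) / 5700941850079337) * X 0 * X 1 ^ 4 + C ((31811104596986 : ℂ) / 5700941850079337) * X 0 ^ 5 + C ((-405862225528663605 : ℂ) / 5700941850079337) * X 1 ^ 4 + C ((-4160928476776245 : ℂ) / 121296635108071) * X 0 * X 1 ^ 3 + C ((427828277694 : ℂ) / 139047362197057) * X 0 ^ 4 + C ((-179495012132769219 : ℂ) / 11401883700158674) * X 1 ^ 3 + C ((-14451130972547956 : ℂ) / 5700941850079337) * X 0 * X 1 ^ 2 + C ((2076871020 : ℂ) / 3391399077977)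 * X 0 ^ 3 + C ((-5835522953768856 : ℂ) / 5700941850079337) * X 1 ^ 2 + C ((-8426245565141940 : ℂ) / 5700941850079337) * X 0 * X 1 + C ((-1952156758292192 : ℂ) / 5700941850079337) * X 0 ^ 2 + C ((-7709325870796092 : ℂ) / 5700941850079337) * X 1 + C ((-3854662935398046 : ℂ) / 5700941850079337) * X 0 + C (-1 : ℂ)

def sf1 : MvPolynomial (Fin 2) ℂ := X 1 * (3 * X 1 - 2 * X 0 ^ 2)

def sf2 : MvPolynomial (Fin 2) ℂ :=
  2 * X 1 ^ 2 * X 0 ^ 2 - 2 * X 1 * X 0 ^ 4 + X 0 ^ 6 - 2 * X 1 ^ 3 + X 0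

def sJ : Ideal (MvPolynomial (Fin 2) ℂ) := Ideal.span {sf1, sf2}

theorem lem1 : (Polynomial.X - sa) * (3 * (Polynomial.X - sa) - 2 * sa ^ 2) = sP * sc1 := by
  unfold sa sP sc1
  apply Polynomial.funext
  intro z
  simp only [Polynomial.eval_add, Polynomial.eval_sub, Polynomial.eval_mul, Polynomial.eval_pow,
    Polynomial.eval_ofNat, Polynomial.eval_X, Polynomial.eval_C]
  ring

theorem lem2 :
    2 * (Polynomial.X - sa) ^ 2 * sa ^ 2 - 2 * (Polynomial.X - sa) * sa ^ 4 + sa ^ 6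
      - 2 * (Polynomial.X - sa) ^ 3 + sa = sP * sc2 := by
  unfold sa sP sc2
  apply Polynomial.funext
  intro z
  simp only [Polynomial.eval_add, Polynomial.eval_sub, Polynomial.eval_mul, Polynomial.eval_pow,
    Polynomial.eval_ofNat, Polynomial.eval_X, Polynomial.eval_C]
  ring

theorem lem3 :
    Polynomial.aeval (X 0 + X 1 : MvPolynomial (Fin 2) ℂ) sP = su1 * sf1 + sv1 * sf2 := by
  unfold sP su1 sv1 sf1 sf2
  simp only [map_add, map_sub, map_mul, map_pow, map_ofNat, Polynomial.aeval_X,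
    Polynomial.aeval_C]
  apply MvPolynomial.funext
  intro w
  simp only [map_ofNat, MvPolynomial.eval_add, MvPolynomial.eval_sub, MvPolynomial.eval_mul,
    MvPolynomial.eval_pow, MvPolynomial.eval_X, MvPolynomial.eval_C, MvPolynomial.algebraMap_eq]
  ring

theorem lem4 :
    Polynomial.aeval (X 0 + X 1 : MvPolynomial (Fin 2) ℂ) sa
      = X 0 + (su2 * sf1 + sv2 * sf2) := by
  unfold sa su2 sv2 sf1 sf2
  simp only [map_add, map_sub, map_mul, map_pow, map_ofNat, Polynomial.aeval_X,
    Polynomial.aeval_C, MvPolynomial.algebraMap_eq]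
  apply MvPolynomial.funext
  intro w
  simp only [map_ofNat, MvPolynomial.eval_add, MvPolynomial.eval_sub, MvPolynomial.eval_mul,
    MvPolynomial.eval_pow, MvPolynomial.eval_X, MvPolynomial.eval_C]
  ring

/-- images of the two variables in `AdjoinRoot sP` -/
def svec : Fin 2 → AdjoinRoot sP :=
  ![AdjoinRoot.mk sP sa, AdjoinRoot.root sP - AdjoinRoot.mk sP sa]

def sphi0 : MvPolynomial (Fin 2) ℂ →ₐ[ℂ] AdjoinRoot sP := MvPolynomial.aeval svec

theorem sphi0_sf1 : sphi0 sf1 = 0 := by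
  have h : sphi0 sf1 = AdjoinRoot.mk sP (sP * sc1) := by
    rw [← lem1]
    simp only [sphi0, sf1, svec, map_mul, map_sub, map_ofNat, map_pow, MvPolynomial.aeval_X,
      Matrix.cons_val_zero, Matrix.cons_val_one, Matrix.head_cons, AdjoinRoot.mk_X]
  rw [h, AdjoinRoot.mk_eq_zero]
  exact dvd_mul_right _ _

theorem sphi0_sf2 : sphi0 sf2 = 0 := by
  have h : sphi0 sf2 = AdjoinRoot.mk sP (sP * sc2) := by
    rw [← lem2]
    simp only [sphi0, sf2, svec, map_add, map_mul, map_sub, map_ofNat, map_pow,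
      MvPolynomial.aeval_X, Matrix.cons_val_zero, Matrix.cons_val_one, Matrix.head_cons,
      AdjoinRoot.mk_X]
  rw [h, AdjoinRoot.mk_eq_zero]
  exact dvd_mul_right _ _

theorem sphi0_ker : ∀ p ∈ sJ, sphi0 p = 0 := by
  have hle : sJ ≤ RingHom.ker sphi0.toRingHom := by
    rw [sJ, Ideal.span_le]
    rintro q hq
    simp only [SetLike.mem_coe, RingHom.mem_ker, AlgHom.toRingHom_eq_coe, RingHom.coe_coe]
    rcases hq with rfl | hq
    · exact sphi0_sf1
    · rw [Set.mem_singleton_iff] at hq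
      subst hq
      exact sphi0_sf2
  intro p hp
  have := hle hp
  simpa only [RingHom.mem_ker, AlgHom.toRingHom_eq_coe, RingHom.coe_coe] using this

def sphi : (MvPolynomial (Fin 2) ℂ ⧸ sJ) →ₐ[ℂ] AdjoinRoot sP :=
  Ideal.Quotient.liftₐ sJ sphi0 sphi0_ker

theorem sphi_mk (p : MvPolynomial (Fin 2) ℂ) :
    sphi (Ideal.Quotient.mk sJ p) = sphi0 p := by
  simp [sphi, Ideal.Quotient.liftₐ_apply, Ideal.Quotient.lift_mk]
  rfl

theorem saeval_xy_sP : Polynomial.aeval ((Ideal.Quotient.mkₐ ℂ sJ) (X 0 + X 1)) sP = 0 := by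
  rw [Polynomial.aeval_algHom_apply, lem3]
  rw [map_add, map_mul, map_mul]
  have h1 : (Ideal.Quotient.mkₐ ℂ sJ) sf1 = 0 := by
    rw [Ideal.Quotient.mkₐ_eq_mk, Ideal.Quotient.eq_zero_iff_mem]
    exact Ideal.subset_span (Set.mem_insert _ _)
  have h2 : (Ideal.Quotient.mkₐ ℂ sJ) sf2 = 0 := by
    rw [Ideal.Quotient.mkₐ_eq_mk, Ideal.Quotient.eq_zero_iff_mem]
    exact Ideal.subset_span (Set.mem_insert_of_mem _ rfl)
  rw [h1, h2]
  ring

def spsi : AdjoinRoot sP →ₐ[ℂ] (MvPolynomial (Fin 2) ℂ ⧸ sJ) :=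
  AdjoinRoot.liftAlgHom sP (Algebra.ofId ℂ _) ((Ideal.Quotient.mkₐ ℂ sJ) (X 0 + X 1))
    (by rw [Algebra.toRingHom_ofId, ← Polynomial.aeval_def]; exact saeval_xy_sP)

theorem smk_sa_aeval :
    spsi (AdjoinRoot.mk sP sa) = (Ideal.Quotient.mkₐ ℂ sJ) (X 0) := by
  rw [← AdjoinRoot.aeval_eq, ← Polynomial.aeval_algHom_apply]
  simp only [spsi, AdjoinRoot.liftAlgHom_root]
  rw [Polynomial.aeval_algHom_apply, lem4, map_add, map_add, map_mul, map_mul]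
  have h1 : (Ideal.Quotient.mkₐ ℂ sJ) sf1 = 0 := by
    rw [Ideal.Quotient.mkₐ_eq_mk, Ideal.Quotient.eq_zero_iff_mem]
    exact Ideal.subset_span (Set.mem_insert _ _)
  have h2 : (Ideal.Quotient.mkₐ ℂ sJ) sf2 = 0 := by
    rw [Ideal.Quotient.mkₐ_eq_mk, Ideal.Quotient.eq_zero_iff_mem]
    exact Ideal.subset_span (Set.mem_insert_of_mem _ rfl)
  rw [h1, h2]
  ring

def sequiv : (MvPolynomial (Fin 2) ℂ ⧸ sJ) ≃ₐ[ℂ] AdjoinRoot sP := by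
  refine AlgEquiv.ofAlgHom sphi spsi ?_ ?_
  · apply AdjoinRoot.algHom_ext
    simp only [AlgHom.coe_comp, Function.comp_apply, AlgHom.coe_id, id_eq]
    rw [spsi, AdjoinRoot.liftAlgHom_root]
    have : ((Ideal.Quotient.mkₐ ℂ sJ) (X 0 + X 1) : MvPolynomial (Fin 2) ℂ ⧸ sJ)
        = Ideal.Quotient.mk sJ (X 0 + X 1) := rfl
    rw [this, sphi_mk]
    simp only [sphi0, svec, map_add, MvPolynomial.aeval_X, Matrix.cons_val_zero,
      Matrix.cons_val_one, Matrix.head_cons]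
    ring
  · apply Ideal.Quotient.algHom_ext
    apply MvPolynomial.algHom_ext
    intro i
    fin_cases i
    · simp only [AlgHom.coe_comp, Function.comp_apply, Ideal.Quotient.mkₐ_eq_mk, AlgHom.coe_id,
        id_eq, Fin.zero_eta]
      rw [sphi_mk]
      have h0 : sphi0 (X 0) = AdjoinRoot.mk sP sa := by
        simp [sphi0, svec]
      rw [h0]
      have := smk_sa_aeval
      rw [Ideal.Quotient.mkₐ_eq_mk] at this
      exact this
    · simp only [AlgHom.coe_comp, Function.comp_apply, Ideal.Quotient.mkₐ_eq_mk, AlgHom.coe_id,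
        id_eq, Fin.mk_one]
      rw [sphi_mk]
      have h1 : sphi0 (X 1) = AdjoinRoot.root sP - AdjoinRoot.mk sP sa := by
        simp [sphi0, svec]
      rw [h1, map_sub]
      have hr : spsi (AdjoinRoot.root sP) = Ideal.Quotient.mk sJ (X 0 + X 1) := by
        rw [spsi, AdjoinRoot.liftAlgHom_root]; rfl
      have ha := smk_sa_aeval
      rw [Ideal.Quotient.mkₐ_eq_mk] at ha
      rw [hr, ha, map_add]
      ring

theorem s_natDegree : sP.natDegree = 12 := by
  unfold sP
  compute_degree!

theorem s_ne_zero : sP ≠ 0 := by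
  intro h
  have := s_natDegree
  rw [h] at this
  simp at this

theorem s_finrank : Module.finrank ℂ (AdjoinRoot sP) = 12 := by
  rw [(AdjoinRoot.powerBasis s_ne_zero).finrank]
  exact s_natDegree

theorem sXr_eq :
    Polynomial.X * srP = Polynomial.X ^ 11 - 60 * Polynomial.X ^ 8 - 90 * Polynomial.X ^ 7
      - 122 * Polynomial.X ^ 6 - 60 * Polynomial.X ^ 3 - 90 * Polynomial.X ^ 2
      - 123 * Polynomial.X := by
  unfold srP; ring

theorem sXr_natDegree : (Polynomial.X * srP).natDegree = 11 := by
  rw [sXr_eq]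
  compute_degree!

theorem s_sq : sP = Polynomial.X ^ 2 * srP := by
  unfold sP srP; ring

theorem s_not_reduced : ¬ IsReduced (MvPolynomial (Fin 2) ℂ ⧸ sJ) := by
  intro hred
  set n : MvPolynomial (Fin 2) ℂ ⧸ sJ := sequiv.symm (AdjoinRoot.mk sP (Polynomial.X * srP))
    with hn
  have hsq : n ^ 2 = 0 := by
    rw [hn, ← map_pow, ← map_pow]
    have : (Polynomial.X * srP) ^ 2 = sP * srP := by rw [s_sq]; ring
    rw [this]
    have hz : AdjoinRoot.mk sP (sP * srP) = 0 := by
      rw [AdjoinRoot.mk_eq_zero]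
      exact dvd_mul_right _ _
    rw [hz, map_zero]
  have hn0 : n ≠ 0 := by
    rw [hn]
    intro h
    rw [map_eq_zero_iff _ sequiv.symm.injective, AdjoinRoot.mk_eq_zero] at h
    have h11 : (Polynomial.X * srP) ≠ 0 := by
      intro hz
      have := sXr_natDegree
      rw [hz] at this
      simp at this
    have hle := Polynomial.natDegree_le_of_dvd h h11
    rw [s_natDegree, sXr_natDegree] at hle
    omega
  exact hn0 (IsNilpotent.eq_zero ⟨2, hsq⟩)

end SymplecticAux

/-- the quotient of `ℂ[x,y]` by the ideal generated by `y(3y − 2x²)` and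
`2y²x² − 2yx⁴ + x⁶ − 2y³ + x` is a complex vector space of dimension 12, and it is not
reduced. Here `x = X 0` and `y = X 1`. -/
theorem symplectic_scheme_not_reduced
    (I : Ideal (MvPolynomial (Fin 2) ℂ))
    (hI : I = Ideal.span
      {X 1 * (3 * X 1 - 2 * X 0 ^ 2),
        2 * X 1 ^ 2 * X 0 ^ 2 - 2 * X 1 * X 0 ^ 4 + X 0 ^ 6 - 2 * X 1 ^ 3 + X 0}) :
    Module.finrank ℂ (MvPolynomial (Fin 2) ℂ ⧸ I) = 12 ∧
      ¬ IsReduced (MvPolynomial (Fin 2) ℂ ⧸ I) := by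
  have hJ : I = sJ := by rw [hI]; rfl
  subst hJ
  constructor
  · rw [sequiv.toLinearEquiv.finrank_eq]
    exact s_finrank
  · exact s_not_reduced
end
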